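/- arXiv:2401.10818 — 5 statements merged into one kernel-verified Lean document; each statement's English description precedes it below -/
import Mathlib

section
/- Let α > 0 be fixed and let λ : ℕ → ℝ_{>0} satisfy λ(n)·n^{1+α}/(log n)^α → ∞ as n → ∞ (i.e. λ ∈ ω(n^{−1−α}·log(n)^α)). For each n, let T_n be the survival time of the clique infection chain on {0,…,n} with parameters λ(n), α, started at X₀ = 1. Then there exists a constant c > 0 such that for all sufficiently large n, E[T_n] ≥ 2^{cn}. -/
open scoped ENNReal
open Filter Asymptotics

noncomputable def markovDist {S : Type*} [DecidableEq S] (step : S → S → ℝ≥0∞) (s0 : S) :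
    ℕ → S → ℝ≥0∞
  | 0 => fun J => if J = s0 then 1 else 0
  | t + 1 => fun J => ∑' s : S, markovDist step s0 t s * step s J

open Classical in
noncomputable def absorbStep {S : Type*} (A : Set S) (step : S → S → ℝ≥0∞) :
    S → S → ℝ≥0∞ :=
  fun s => if s ∈ A then (fun J => if J = s then 1 else 0) else step s

noncomputable def hitProb {S : Type*} [DecidableEq S] (step : S → S → ℝ≥0∞) (s0 : S)
    (A : Set S) : ℝ≥0∞ :=
  ⨆ t : ℕ, ∑' s : S, A.indicator (markovDist (absorbStep A step) s0 t) s

noncomputable def cliqueStep (n : ℕ) (lam alpha : ℝ) (I : ℕ) : ℕ → ℝ≥0∞ :=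
  if I = 0 ∨ n < I then fun J => if J = I then 1 else 0
  else fun J =>
    if J = I + 1 then
      ENNReal.ofReal (lam * (I : ℝ) ^ (1 + alpha) * ((n : ℝ) - I) /
        (lam * (I : ℝ) ^ (1 + alpha) * ((n : ℝ) - I) + I))
    else if J = I - 1 then
      ENNReal.ofReal ((I : ℝ) /
        (lam * (I : ℝ) ^ (1 + alpha) * ((n : ℝ) - I) + I))
    else 0

noncomputable def cliqueDist (n : ℕ) (lam alpha : ℝ) (x0 : ℕ) : ℕ → ℕ → ℝ≥0∞ :=
  markovDist (cliqueStep n lam alpha) x0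

noncomputable def cliqueET (n : ℕ) (lam alpha : ℝ) (x0 : ℕ) : ℝ≥0∞ :=
  ∑' t : ℕ, (1 - cliqueDist n lam alpha x0 t 0)


open scoped NNReal

lemma tsum_split0 (h : ℕ → ℝ≥0∞) :
    ∑' s, h s = h 0 + ∑' s, (if s = 0 then 0 else h s) := by
  rw [ENNReal.tsum_eq_add_tsum_ite 0]
  congr 1
  apply tsum_congr
  intro s
  split_ifs <;> rfl

lemma markovDist_mass {step : ℕ → ℕ → ℝ≥0∞} (h : ∀ s, ∑' J, step s J ≤ 1)
    (s0 : ℕ) (t : ℕ) : ∑' s, markovDist step s0 t s ≤ 1 := by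
  induction t with
  | zero =>
      rw [show markovDist step s0 0 = fun J => if J = s0 then 1 else 0 from rfl,
        tsum_eq_single s0 (by intro b hb; simp [hb])]
      simp
  | succ t ih =>
      calc ∑' J, markovDist step s0 (t+1) J
          = ∑' J, ∑' s, markovDist step s0 t s * step s J := rfl
        _ = ∑' s, ∑' J, markovDist step s0 t s * step s J := ENNReal.tsum_comm
        _ = ∑' s, markovDist step s0 t s * ∑' J, step s J := by
            simp [ENNReal.tsum_mul_left]
        _ ≤ ∑' s, markovDist step s0 t s * 1 :=
            ENNReal.tsum_le_tsum (fun s => mul_le_mul_right (h s) _)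
        _ ≤ 1 := by simpa using ih

lemma subsolution_le_survival {step : ℕ → ℕ → ℝ≥0∞}
    (hmass : ∀ s, ∑' J, step s J ≤ 1)
    (f : ℕ → ℝ≥0∞) (M : ℝ≥0) (hfM : ∀ s, f s ≤ (M : ℝ≥0∞)) (hf0 : f 0 = 0)
    (hsub : ∀ s, s ≠ 0 → f s ≤ 1 + ∑' J, step s J * f J)
    (s0 : ℕ) :
    f s0 ≤ ∑' t, (1 - markovDist step s0 t 0) := by
  have hd0ne : ∀ t, markovDist step s0 t 0 ≠ ∞ := by
    intro t
    exact ne_top_of_le_ne_top ENNReal.one_ne_top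
      (le_trans (ENNReal.le_tsum 0) (markovDist_mass hmass s0 t))
  set d := markovDist step s0 with hd
  have htail : ∀ t, ∑' s, (if s = 0 then 0 else d t s) ≤ 1 - d t 0 := by
    intro t
    refine ENNReal.le_sub_of_add_le_left (hd0ne t) ?_
    rw [← tsum_split0]
    exact markovDist_mass hmass s0 t
  have key1 : ∀ t, (∑' s, d t s * f s) ≤ (1 - d t 0) + ∑' s, d (t + 1) s * f s := by
    intro t
    have hgt : (∑' s, d t s * f s) = ∑' s, (if s = 0 then 0 else d t s * f s) := by
      rw [tsum_split0 (fun s => d t s * f s), hf0, mul_zero, zero_add]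
    rw [hgt]
    have hle : ∀ s : ℕ, (if s = 0 then 0 else d t s * f s) ≤
        (if s = 0 then 0 else d t s) + d t s * ∑' J, step s J * f J := by
      intro s
      by_cases hs : s = 0
      · simp [hs]
      · simp only [hs, if_false]
        calc d t s * f s ≤ d t s * (1 + ∑' J, step s J * f J) :=
              mul_le_mul_right (hsub s hs) _
          _ = d t s + d t s * ∑' J, step s J * f J := by rw [mul_add, mul_one]
    calc ∑' s, (if s = 0 then 0 else d t s * f s)
        ≤ ∑' s, ((if s = 0 then 0 else d t s) + d t s * ∑' J, step s J * f J) :=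
          ENNReal.tsum_le_tsum hle
      _ = (∑' s, (if s = 0 then 0 else d t s)) + ∑' s, d t s * ∑' J, step s J * f J :=
          ENNReal.tsum_add
      _ ≤ (1 - d t 0) + ∑' s, d (t + 1) s * f s := by
          refine add_le_add (htail t) (le_of_eq ?_)
          calc ∑' s, d t s * ∑' J, step s J * f J
              = ∑' s, ∑' J, d t s * step s J * f J := by
                refine tsum_congr (fun s => ?_)
                rw [← ENNReal.tsum_mul_left]
                exact tsum_congr (fun J => by ring)
            _ = ∑' J, ∑' s, d t s * step s J * f J := ENNReal.tsum_comm
            _ = ∑' J, (∑' s, d t s * step s J) * f J :=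
                tsum_congr (fun J => ENNReal.tsum_mul_right)
            _ = ∑' J, d (t + 1) J * f J := rfl
  have key2 : ∀ T, f s0 ≤ (∑ t ∈ Finset.range T, (1 - d t 0)) + ∑' s, d T s * f s := by
    have hg0 : (∑' s, d 0 s * f s) = f s0 := by
      rw [show d 0 = fun J => if J = s0 then 1 else 0 from rfl]
      rw [tsum_eq_single s0 (by intro b hb; simp [hb])]
      simp
    intro T
    induction T with
    | zero => simpa using le_of_eq hg0.symm
    | succ T ih =>
        calc f s0 ≤ (∑ t ∈ Finset.range T, (1 - d t 0)) + ∑' s, d T s * f s := ih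
          _ ≤ (∑ t ∈ Finset.range T, (1 - d t 0)) +
              ((1 - d T 0) + ∑' s, d (T + 1) s * f s) := add_le_add_right (key1 T) _
          _ = (∑ t ∈ Finset.range (T + 1), (1 - d t 0)) + ∑' s, d (T + 1) s * f s := by
              rw [Finset.sum_range_succ]; ring
  have hgE : ∀ T, f s0 ≤ (∑' t, (1 - d t 0)) + ∑' s, d T s * f s := by
    intro T
    exact le_trans (key2 T) (add_le_add_left (ENNReal.sum_le_tsum _) _)
  have hgT : ∀ T, (∑' s, d T s * f s) ≤ (M : ℝ≥0∞) * (1 - d T 0) := by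
    intro T
    have h1 : (∑' s, d T s * f s) ≤ ∑' s, (if s = 0 then 0 else d T s) * M := by
      rw [tsum_split0 (fun s => d T s * f s), hf0, mul_zero, zero_add]
      refine ENNReal.tsum_le_tsum (fun s => ?_)
      by_cases hs : s = 0
      · simp [hs]
      · simp only [hs, if_false]
        exact mul_le_mul_right (hfM s) _
    refine le_trans h1 ?_
    rw [ENNReal.tsum_mul_right, mul_comm]
    exact mul_le_mul_right (htail T) _
  by_cases hEtop : (∑' t, (1 - d t 0)) = ⊤
  · rw [hEtop]; exact le_top
  have hsmall : ∀ δ : ℝ≥0∞, δ ≠ 0 → ∃ T, 1 - d T 0 ≤ δ := by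
    intro δ hδ
    by_contra hc
    push_neg at hc
    apply hEtop
    refine top_unique ?_
    rw [← ENNReal.tsum_const_eq_top_of_ne_zero (α := ℕ) hδ]
    exact ENNReal.tsum_le_tsum (fun t => (hc t).le)
  refine ENNReal.le_of_forall_pos_le_add (fun ε hε _ => ?_)
  by_cases hM : M = 0
  · have h1 := hfM s0
    rw [hM] at h1
    simpa using le_trans (le_trans h1 (by simp)) (le_add_right le_rfl)
  obtain ⟨T, hT⟩ := hsmall ((ε : ℝ≥0∞) / M) (by
    simp [ENNReal.div_eq_zero_iff, hM, hε.ne', ENNReal.coe_ne_top])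
  refine le_trans (hgE T) (add_le_add_right ?_ _)
  calc (∑' s, d T s * f s) ≤ (M : ℝ≥0∞) * (1 - d T 0) := hgT T
    _ ≤ (M : ℝ≥0∞) * ((ε : ℝ≥0∞) / M) := mul_le_mul_right hT _
    _ ≤ ε := ENNReal.mul_div_le

lemma pow_le_factorial_mul_exp (N : ℕ) : (N : ℝ) ^ N ≤ (Nat.factorial N : ℝ) * Real.exp N := by
  induction N with
  | zero => simp
  | succ N ih =>
    have hcast : ((N + 1 : ℕ) : ℝ) = (N : ℝ) + 1 := by push_cast; ring
    have hstep : ((N : ℝ) + 1) ^ N ≤ (N : ℝ) ^ N * Real.exp 1 := by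
      rcases Nat.eq_zero_or_pos N with h0 | hN
      · simp [h0, Real.one_le_exp]
      · have hNpos : (0 : ℝ) < N := by exact_mod_cast hN
        have h1 : (N : ℝ) + 1 ≤ N * Real.exp (1 / N) := by
          have h := Real.add_one_le_exp (1 / (N : ℝ))
          have h2 : (N : ℝ) * (1 / N + 1) ≤ N * Real.exp (1 / N) :=
            mul_le_mul_of_nonneg_left h hNpos.le
          calc (N : ℝ) + 1 = N * (1 / N + 1) := by field_simp; ring
            _ ≤ N * Real.exp (1 / N) := h2
        calc ((N : ℝ) + 1) ^ N ≤ ((N : ℝ) * Real.exp (1 / N)) ^ N :=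
              pow_le_pow_left₀ (by positivity) h1 N
          _ = (N : ℝ) ^ N * Real.exp (1 / N) ^ N := mul_pow _ _ _
          _ = (N : ℝ) ^ N * Real.exp 1 := by
              rw [← Real.exp_nat_mul]
              congr 2
              field_simp
    have hfac : (0:ℝ) ≤ (Nat.factorial N : ℝ) := by positivity
    calc ((N + 1 : ℕ) : ℝ) ^ (N + 1) = ((N : ℝ) + 1) * ((N : ℝ) + 1) ^ N := by
          push_cast; ring
      _ ≤ ((N : ℝ) + 1) * ((N : ℝ) ^ N * Real.exp 1) := by
          have : (0:ℝ) ≤ (N:ℝ) + 1 := by positivity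
          exact mul_le_mul_of_nonneg_left hstep this
      _ ≤ ((N : ℝ) + 1) * ((Nat.factorial N : ℝ) * Real.exp N * Real.exp 1) := by
          have h3 : (N : ℝ) ^ N * Real.exp 1 ≤ (Nat.factorial N : ℝ) * Real.exp N * Real.exp 1 :=
            mul_le_mul_of_nonneg_right ih (Real.exp_pos 1).le
          exact mul_le_mul_of_nonneg_left h3 (by positivity)
      _ = (Nat.factorial (N+1) : ℝ) * Real.exp ((N + 1 : ℕ) : ℝ) := by
          rw [Nat.factorial_succ, hcast]
          push_cast
          rw [Real.exp_add]
          ring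

lemma exp_pow_le_factorial (N : ℕ) : ((N : ℝ) / Real.exp 1) ^ N ≤ (Nat.factorial N : ℝ) := by
  have h := pow_le_factorial_mul_exp N
  have he : (0:ℝ) < Real.exp 1 ^ N := by positivity
  rw [div_pow, div_le_iff₀ he]
  calc (N:ℝ) ^ N ≤ (Nat.factorial N : ℝ) * Real.exp N := h
    _ = (Nat.factorial N : ℝ) * Real.exp 1 ^ N := by rw [← Real.exp_nat_mul]; norm_num


/-- birth rate -/
noncomputable def cliqueB (n : ℕ) (lam alpha : ℝ) (j : ℕ) : ℝ :=
  lam * (j : ℝ) ^ (1 + alpha) * ((n : ℝ) - j)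

noncomputable def cliqueW (n : ℕ) (lam alpha : ℝ) (m i : ℕ) : ℝ :=
  ∏ j ∈ Finset.Ico (i + 1) m, (cliqueB n lam alpha j / j)

noncomputable def cliqueF (n : ℕ) (lam alpha : ℝ) (m k : ℕ) : ℝ :=
  ∑ i ∈ Finset.range (min k m), cliqueW n lam alpha m i

lemma tsum_pair_support (g : ℕ → ℝ≥0∞) (a b : ℕ) (hab : a ≠ b)
    (h : ∀ J, J ≠ a → J ≠ b → g J = 0) : ∑' J, g J = g a + g b := by
  rw [tsum_eq_sum (s := ({a, b} : Finset ℕ))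
    (by intro J hJ; simp only [Finset.mem_insert, Finset.mem_singleton] at hJ
        push_neg at hJ; exact h J hJ.1 hJ.2)]
  exact Finset.sum_pair hab

section B
variable {n m : ℕ} {lam alpha : ℝ}

lemma cliqueB_nonneg (hlam : 0 < lam) {s : ℕ} (hs : s ≤ n) :
    0 ≤ cliqueB n lam alpha s := by
  have h1 : (0:ℝ) ≤ (n : ℝ) - s := by
    have := Nat.cast_le (α := ℝ).2 hs
    linarith
  have h2 : (0:ℝ) ≤ (s : ℝ) ^ (1 + alpha) := Real.rpow_nonneg (Nat.cast_nonneg s) _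
  unfold cliqueB
  exact mul_nonneg (mul_nonneg hlam.le h2) h1

lemma cliqueB_pos (hlam : 0 < lam) {s : ℕ} (hs1 : 1 ≤ s) (hs : s < n) :
    0 < cliqueB n lam alpha s := by
  have h1 : (0:ℝ) < (n : ℝ) - s := by
    have : (s:ℝ) < n := Nat.cast_lt.2 hs
    linarith
  have h2 : (0:ℝ) < (s : ℝ) ^ (1 + alpha) :=
    Real.rpow_pos_of_pos (by exact_mod_cast hs1) _
  unfold cliqueB
  exact mul_pos (mul_pos hlam h2) h1

lemma cliqueW_pos (hlam : 0 < lam) (hmn : m ≤ n) (i : ℕ) :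
    0 < cliqueW n lam alpha m i := by
  refine Finset.prod_pos (fun j hj => ?_)
  rw [Finset.mem_Ico] at hj
  have hj1 : 1 ≤ j := le_trans (Nat.le_add_left 1 i) hj.1
  have hjn : j < n := lt_of_lt_of_le hj.2 hmn
  exact div_pos (cliqueB_pos hlam hj1 hjn) (by exact_mod_cast hj1)

lemma cliqueF_nonneg (hlam : 0 < lam) (hmn : m ≤ n) (k : ℕ) :
    0 ≤ cliqueF n lam alpha m k :=
  Finset.sum_nonneg (fun i _ => (cliqueW_pos hlam hmn i).le)

lemma cliqueF_le (hlam : 0 < lam) (hmn : m ≤ n) (k : ℕ) :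
    cliqueF n lam alpha m k ≤ cliqueF n lam alpha m m := by
  refine Finset.sum_le_sum_of_subset_of_nonneg ?_ (fun i _ _ => (cliqueW_pos hlam hmn i).le)
  exact Finset.range_subset.2 (by simp [min_le_right])

lemma cliqueF_succ {k : ℕ} (hk : k < m) :
    cliqueF n lam alpha m (k + 1) = cliqueF n lam alpha m k + cliqueW n lam alpha m k := by
  unfold cliqueF
  rw [min_eq_left hk, min_eq_left hk.le, Finset.sum_range_succ]

lemma cliqueF_stab {k : ℕ} (hk : m ≤ k) :
    cliqueF n lam alpha m k = cliqueF n lam alpha m m := by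
  unfold cliqueF
  rw [min_eq_right hk, min_self]

lemma cliqueW_top : cliqueW n lam alpha m (m - 1 + 1) = 1 := by
  unfold cliqueW
  rw [Finset.Ico_eq_empty (by omega), Finset.prod_empty]

lemma cliqueW_step {s : ℕ} (hs1 : 1 ≤ s) (hsm : s < m) :
    cliqueW n lam alpha m (s - 1) = (cliqueB n lam alpha s / s) * cliqueW n lam alpha m s := by
  unfold cliqueW
  rw [show s - 1 + 1 = s from by omega]
  exact Finset.prod_eq_prod_Ico_succ_bot hsm _

lemma cliqueStep_mass (hlam : 0 < lam) (s : ℕ) :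
    ∑' J, cliqueStep n lam alpha s J ≤ 1 := by
  unfold cliqueStep
  by_cases h : s = 0 ∨ n < s
  · rw [if_pos h, tsum_eq_single s (by intro b hb; simp [hb])]
    simp
  · rw [if_neg h]
    push_neg at h
    obtain ⟨hs0, hsn⟩ := h
    have hs1 : 1 ≤ s := Nat.one_le_iff_ne_zero.2 hs0
    set b := lam * (s : ℝ) ^ (1 + alpha) * ((n : ℝ) - s) with hb
    have hbnn : 0 ≤ b := cliqueB_nonneg hlam hsn
    have hB : 0 < b + s := by
      have : (1:ℝ) ≤ s := by exact_mod_cast hs1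
      linarith
    rw [tsum_pair_support _ (s+1) (s-1) (by omega) (by intro J h1 h2; simp [h1, h2])]
    rw [if_pos rfl, if_neg (by omega : ¬ s - 1 = s + 1), if_pos rfl]
    rw [← ENNReal.ofReal_add (by positivity) (by positivity)]
    rw [← add_div, div_self hB.ne']
    simp

lemma clique_subsol (hlam : 0 < lam) (hm1 : 1 ≤ m) (hmn : m ≤ n) :
    ENNReal.ofReal (cliqueW n lam alpha m 0) ≤ cliqueET n lam alpha 1 := by
  set F := cliqueF n lam alpha m with hF
  set f : ℕ → ℝ≥0∞ := fun k => ENNReal.ofReal (F k) with hf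
  have hbound : ∀ k, f k ≤ ((F m).toNNReal : ℝ≥0∞) := by
    intro k
    exact ENNReal.ofReal_le_ofReal (cliqueF_le hlam hmn k)
  have hf0 : f 0 = 0 := by
    simp only [hf, hF]
    unfold cliqueF
    simp
  have hsub : ∀ s, s ≠ 0 → f s ≤ 1 + ∑' J, cliqueStep n lam alpha s J * f J := by
    intro s hs0
    by_cases hsn : n < s
    · rw [show cliqueStep n lam alpha s = fun J => if J = s then 1 else 0 from by
        unfold cliqueStep; rw [if_pos (Or.inr hsn)]]
      rw [tsum_eq_single s (by intro b hb; simp [hb])]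
      have : (if s = s then (1:ℝ≥0∞) else 0) * f s = f s := by simp
      rw [this]
      exact le_add_of_nonneg_left zero_le_one
    push_neg at hsn
    have hs1 : 1 ≤ s := Nat.one_le_iff_ne_zero.2 hs0
    rw [show cliqueStep n lam alpha s = fun J =>
        if J = s + 1 then
          ENNReal.ofReal (lam * (s : ℝ) ^ (1 + alpha) * ((n : ℝ) - s) /
            (lam * (s : ℝ) ^ (1 + alpha) * ((n : ℝ) - s) + s))
        else if J = s - 1 then
          ENNReal.ofReal ((s : ℝ) / (lam * (s : ℝ) ^ (1 + alpha) * ((n : ℝ) - s) + s))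
        else 0 from by
      unfold cliqueStep; rw [if_neg (by omega)]]
    rw [tsum_pair_support _ (s+1) (s-1) (by omega) (by intro J h1 h2; simp [h1, h2])]
    have e1 : ∀ (p q : ℝ≥0∞),
        (fun J => if J = s + 1 then p else if J = s - 1 then q else 0) (s + 1) = p := by
      intro p q; simp
    have e2 : ∀ (p q : ℝ≥0∞),
        (fun J => if J = s + 1 then p else if J = s - 1 then q else 0) (s - 1) = q := by
      intro p q; simp [show ¬ (s - 1 = s + 1) from by omega]
    rw [e1, e2]
    set b := lam * (s : ℝ) ^ (1 + alpha) * ((n : ℝ) - s) with hbdef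
    have hbeq : b = cliqueB n lam alpha s := rfl
    have hbnn : 0 ≤ b := hbeq ▸ cliqueB_nonneg hlam hsn
    have hsR : (1:ℝ) ≤ s := by exact_mod_cast hs1
    have hB : 0 < b + s := by linarith
    have hFnn : ∀ k, 0 ≤ F k := cliqueF_nonneg hlam hmn
    have hp1 : 0 ≤ b / (b + s) := div_nonneg hbnn hB.le
    have hp2 : 0 ≤ (s:ℝ) / (b + s) := div_nonneg (by positivity) hB.le
    rw [hf]
    simp only
    rw [← ENNReal.ofReal_mul hp1, ← ENNReal.ofReal_mul hp2,
      ← ENNReal.ofReal_add (mul_nonneg hp1 (hFnn _)) (mul_nonneg hp2 (hFnn _)),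
      ← ENNReal.ofReal_one,
      ← ENNReal.ofReal_add (by norm_num)
        (add_nonneg (mul_nonneg hp1 (hFnn _)) (mul_nonneg hp2 (hFnn _)))]
    refine ENNReal.ofReal_le_ofReal ?_
    have hkey : F s * (b + s) ≤ (b + s) + (b * F (s + 1) + s * F (s - 1)) := by
      rcases lt_or_ge s m with hsm | hsm
      · have hA : F (s + 1) = F s + cliqueW n lam alpha m s := cliqueF_succ hsm
        have hsplit : F s = F (s - 1) + cliqueW n lam alpha m (s - 1) := by
          have := cliqueF_succ (n := n) (lam := lam) (alpha := alpha)
            (k := s - 1) (by omega : s - 1 < m)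
          rw [show s - 1 + 1 = s from by omega] at this
          exact this
        have hW : (s:ℝ) * cliqueW n lam alpha m (s - 1) = b * cliqueW n lam alpha m s := by
          rw [cliqueW_step hs1 hsm, hbeq]
          field_simp
        nlinarith [hFnn s]
      · have hA : F (s + 1) = F m := cliqueF_stab (by omega)
        have hs' : F s = F m := cliqueF_stab hsm
        rcases eq_or_lt_of_le hsm with hsm' | hsm'
        · have hC : F (s - 1) = F m - 1 := by
            have h1 : F m = F (m - 1) + cliqueW n lam alpha m (m - 1) := by
              have := cliqueF_succ (n := n) (lam := lam) (alpha := alpha)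
                (k := m - 1) (by omega : m - 1 < m)
              rw [show m - 1 + 1 = m from by omega] at this
              exact this
            have h2 : cliqueW n lam alpha m (m - 1) = 1 := by
              have := cliqueW_top (n := n) (lam := lam) (alpha := alpha) (m := m)
              rw [show m - 1 + 1 = m from by omega] at this
              unfold cliqueW
              rw [Finset.Ico_eq_empty (by omega), Finset.prod_empty]
            rw [show s - 1 = m - 1 from by omega, h1, h2]
            ring
          rw [hA, hs', hC, ← hsm']
          nlinarith [hFnn m]
        · have hC : F (s - 1) = F m := cliqueF_stab (by omega)
          rw [hA, hs', hC]
          nlinarith [hFnn m]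
    have h2 : 1 + (b / (b + s) * F (s + 1) + (s:ℝ) / (b + s) * F (s - 1)) =
        ((b + s) + (b * F (s + 1) + s * F (s - 1))) / (b + s) := by
      field_simp
    rw [h2, le_div_iff₀ hB]
    linarith [hkey]
  have hmain := subsolution_le_survival (cliqueStep_mass hlam) f ((F m).toNNReal)
    hbound hf0 hsub 1
  have hf1 : f 1 = ENNReal.ofReal (cliqueW n lam alpha m 0) := by
    simp only [hf, hF]
    unfold cliqueF
    rw [min_eq_left hm1, Finset.sum_range_one]
  rw [← hf1]
  exact hmain

end B

lemma cliqueW_lower (n : ℕ) (lam alpha : ℝ) (ha : 0 < alpha)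
    (hn : 8 ≤ n)
    (hlog : (4 : ℝ) ^ (1 / alpha) * (4 * Real.exp 1) ≤ Real.log n)
    (hlam : Real.log n ^ alpha ≤ lam * (n : ℝ) ^ (1 + alpha)) :
    (2 : ℝ) ^ ((1 / 8 : ℝ) * n) ≤ cliqueW n lam alpha (n / 2) 0 := by
  set L := Real.log n with hLdef
  have hL : 0 < L := by
    have h4 : (0:ℝ) < (4 : ℝ) ^ (1 / alpha) * (4 * Real.exp 1) := by positivity
    linarith
  have hnR : (0:ℝ) < n := by
    have : (8:ℝ) ≤ n := by exact_mod_cast hn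
    linarith
  set m := n / 2 with hm
  set N := m - 1 with hN
  have hmN : m = N + 1 := by omega
  have hm4 : n ≤ 4 * N := by omega
  have hm8 : n ≤ 8 * N := by omega
  have hNn2 : (2 : ℕ) * m ≤ n := by omega
  have hLn : 0 ≤ L / n := div_nonneg hL.le hnR.le
  have hq : (0:ℝ) ≤ L / (4 * Real.exp 1) := div_nonneg hL.le (by positivity)
  -- each factor is at least (1/2) * (j * L / n) ^ alpha
  have hfac : ∀ j ∈ Finset.Ico 1 m,
      (1 / 2 : ℝ) * ((j : ℝ) * L / n) ^ alpha ≤ cliqueB n lam alpha j / j := by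
    intro j hj
    rw [Finset.mem_Ico] at hj
    have hj1 : (1:ℝ) ≤ j := by exact_mod_cast hj.1
    have hj0 : (0:ℝ) < j := by linarith
    have hjm : (j:ℝ) < m := by exact_mod_cast hj.2
    have hmn2 : 2 * (m:ℝ) ≤ n := by exact_mod_cast hNn2
    have hnj : (n:ℝ) / 2 ≤ (n:ℝ) - j := by linarith
    have hsplit : cliqueB n lam alpha j / j = lam * (j:ℝ) ^ alpha * ((n:ℝ) - j) := by
      unfold cliqueB
      rw [Real.rpow_add hj0, Real.rpow_one]
      field_simp
    rw [hsplit]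
    have hlam' : L ^ alpha / (n:ℝ) ^ (1 + alpha) ≤ lam := by
      rw [div_le_iff₀ (by positivity)]
      linarith [hlam]
    have hrpow : ((j : ℝ) * L / n) ^ alpha = (j:ℝ) ^ alpha * L ^ alpha / (n:ℝ) ^ alpha := by
      rw [Real.div_rpow (by positivity) hnR.le, Real.mul_rpow hj0.le hL.le]
    rw [hrpow]
    have hnpow : (n:ℝ) ^ (1 + alpha) = n * (n:ℝ) ^ alpha := by
      rw [Real.rpow_add hnR, Real.rpow_one]
    have e1 : (1 / 2 : ℝ) * ((j:ℝ) ^ alpha * L ^ alpha / (n:ℝ) ^ alpha) =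
        (L ^ alpha / (n:ℝ) ^ (1 + alpha)) * (j:ℝ) ^ alpha * ((n:ℝ) / 2) := by
      rw [hnpow]
      have h1 : (0:ℝ) < (n:ℝ) ^ alpha := Real.rpow_pos_of_pos hnR _
      field_simp
    rw [e1]
    have hja : (0:ℝ) < (j:ℝ) ^ alpha := Real.rpow_pos_of_pos hj0 _
    have hstep1 : (L ^ alpha / (n:ℝ) ^ (1 + alpha)) * (j:ℝ) ^ alpha * ((n:ℝ) / 2) ≤
        lam * (j:ℝ) ^ alpha * ((n:ℝ) / 2) := by
      have h2 := mul_le_mul_of_nonneg_right hlam' hja.le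
      exact mul_le_mul_of_nonneg_right h2 (by positivity)
    refine le_trans hstep1 ?_
    have hlamnn : 0 ≤ lam := by
      by_contra hc
      push_neg at hc
      have : lam * (n:ℝ) ^ (1 + alpha) < 0 :=
        mul_neg_of_neg_of_pos hc (Real.rpow_pos_of_pos hnR _)
      have : L ^ alpha < 0 := lt_of_le_of_lt hlam this
      exact absurd this (not_lt.2 (Real.rpow_nonneg hL.le _))
    exact mul_le_mul_of_nonneg_left hnj (mul_nonneg hlamnn hja.le)
  have hprod1 : ∏ j ∈ Finset.Ico 1 m, ((1 / 2 : ℝ) * ((j : ℝ) * L / n) ^ alpha) ≤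
      cliqueW n lam alpha m 0 := by
    unfold cliqueW
    rw [show (0:ℕ) + 1 = 1 from rfl]
    refine Finset.prod_le_prod (fun j hj => ?_) hfac
    exact mul_nonneg (by norm_num)
      (Real.rpow_nonneg (div_nonneg (mul_nonneg (Nat.cast_nonneg j) hL.le) hnR.le) _)
  have hcard : (Finset.Ico 1 m).card = N := by rw [Nat.card_Ico]
  have hsplit2 : ∏ j ∈ Finset.Ico 1 m, ((1 / 2 : ℝ) * ((j : ℝ) * L / n) ^ alpha) =
      (1 / 2 : ℝ) ^ N * (∏ j ∈ Finset.Ico 1 m, ((j : ℝ) * L / n)) ^ alpha := by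
    rw [Finset.prod_mul_distrib, Finset.prod_const, hcard]
    congr 1
    exact Real.finset_prod_rpow _ _
      (fun j _ => div_nonneg (mul_nonneg (Nat.cast_nonneg j) hL.le) hnR.le) _
  have hinner : ∏ j ∈ Finset.Ico 1 m, ((j : ℝ) * L / n) =
      (Nat.factorial N : ℝ) * (L / n) ^ N := by
    have hc0 : ∀ j ∈ Finset.Ico 1 m, (j : ℝ) * L / n = (j : ℝ) * (L / n) := by
      intro j _; ring
    rw [Finset.prod_congr rfl hc0, Finset.prod_mul_distrib, Finset.prod_const, hcard]
    have hc2 : (∏ j ∈ Finset.Ico 1 m, j) = Nat.factorial N := by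
      rw [hmN]; exact Finset.prod_Ico_id_eq_factorial N
    rw [← Nat.cast_prod, hc2]
  have hfact : ((N : ℝ) / Real.exp 1) ^ N * (L / n) ^ N ≤
      (Nat.factorial N : ℝ) * (L / n) ^ N :=
    mul_le_mul_of_nonneg_right (exp_pow_le_factorial N) (pow_nonneg hLn N)
  have hcollect : ((N : ℝ) / Real.exp 1) ^ N * (L / n) ^ N =
      ((N : ℝ) * L / (Real.exp 1 * n)) ^ N := by
    rw [← mul_pow]
    congr 1
    field_simp
  have hquarter : L / (4 * Real.exp 1) ≤ (N : ℝ) * L / (Real.exp 1 * n) := by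
    have hNn : (n : ℝ) ≤ 4 * N := by exact_mod_cast hm4
    rw [div_le_div_iff₀ (by positivity) (by positivity)]
    have hkey := mul_le_mul_of_nonneg_left hNn (mul_nonneg (Real.exp_pos 1).le hL.le)
    nlinarith [hkey]
  have hbase : (4 : ℝ) ≤ (L / (4 * Real.exp 1)) ^ alpha := by
    have h1 : (4 : ℝ) ^ (1 / alpha) ≤ L / (4 * Real.exp 1) := by
      rw [le_div_iff₀ (by positivity)]
      linarith [hlog]
    have h2 : ((4:ℝ) ^ (1 / alpha)) ^ alpha = 4 := by
      rw [← Real.rpow_mul (by norm_num : (0:ℝ) ≤ 4), one_div_mul_cancel ha.ne', Real.rpow_one]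
    calc (4:ℝ) = ((4:ℝ) ^ (1 / alpha)) ^ alpha := h2.symm
      _ ≤ (L / (4 * Real.exp 1)) ^ alpha :=
          Real.rpow_le_rpow (Real.rpow_nonneg (by norm_num) _) h1 ha.le
  set X := ∏ j ∈ Finset.Ico 1 m, ((j : ℝ) * L / n) with hX
  have hXge : (L / (4 * Real.exp 1)) ^ N ≤ X := by
    calc (L / (4 * Real.exp 1)) ^ N ≤ ((N : ℝ) * L / (Real.exp 1 * n)) ^ N :=
          pow_le_pow_left₀ hq hquarter N
      _ = ((N : ℝ) / Real.exp 1) ^ N * (L / n) ^ N := hcollect.symm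
      _ ≤ (Nat.factorial N : ℝ) * (L / n) ^ N := hfact
      _ = X := hinner.symm
  have hXa : ((L / (4 * Real.exp 1)) ^ alpha) ^ N ≤ X ^ alpha := by
    have h1 : ((L / (4 * Real.exp 1)) ^ N : ℝ) ^ alpha ≤ X ^ alpha :=
      Real.rpow_le_rpow (pow_nonneg hq N) hXge ha.le
    have h2 : ((L / (4 * Real.exp 1)) ^ N : ℝ) ^ alpha =
        ((L / (4 * Real.exp 1)) ^ alpha) ^ N := by
      rw [← Real.rpow_natCast (L / (4 * Real.exp 1)) N, ← Real.rpow_mul hq,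
        mul_comm ((N:ℕ):ℝ) alpha, Real.rpow_mul hq, Real.rpow_natCast]
    rw [← h2]
    exact h1
  have h4N : (4:ℝ) ^ N ≤ ((L / (4 * Real.exp 1)) ^ alpha) ^ N :=
    pow_le_pow_left₀ (by norm_num) hbase N
  have hNreal : (1/8 : ℝ) * n ≤ (N : ℝ) := by
    have : (n:ℝ) ≤ 8 * N := by exact_mod_cast hm8
    linarith
  calc (2:ℝ) ^ ((1/8 : ℝ) * n) ≤ (2:ℝ) ^ ((N:ℕ) : ℝ) :=
        Real.rpow_le_rpow_of_exponent_le (by norm_num) hNreal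
    _ = (2:ℝ) ^ (N:ℕ) := Real.rpow_natCast 2 N
    _ = (1/2 : ℝ) ^ N * 4 ^ N := by rw [← mul_pow]; norm_num
    _ ≤ (1/2 : ℝ) ^ N * X ^ alpha := by
        refine mul_le_mul_of_nonneg_left (le_trans h4N hXa) ?_
        positivity
    _ = ∏ j ∈ Finset.Ico 1 m, ((1 / 2 : ℝ) * ((j : ℝ) * L / n) ^ alpha) := hsplit2.symm
    _ ≤ cliqueW n lam alpha m 0 := hprod1


/-- For super-linear scaling with λ ∈ ω(n^{-1-α} log(n)^α), the expected
survival time of the clique infection chain started at 1 is at least 2^{cn}. -/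
theorem clique_superlinear_survival_lower (alpha : ℝ) (ha : 0 < alpha)
    (lam : ℕ → ℝ) (hpos : ∀ n, 0 < lam n)
    (hcond : Tendsto (fun n : ℕ =>
      lam n * (n : ℝ) ^ (1 + alpha) / Real.log n ^ alpha) atTop atTop) :
    ∃ c : ℝ, 0 < c ∧ ∀ᶠ n : ℕ in atTop,
      ENNReal.ofReal ((2 : ℝ) ^ (c * n)) ≤ cliqueET n (lam n) alpha 1 := by
  refine ⟨1/8, by norm_num, ?_⟩
  have hlog_ev : ∀ᶠ n : ℕ in atTop,
      (4:ℝ) ^ (1/alpha) * (4 * Real.exp 1) ≤ Real.log n :=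
    (Real.tendsto_log_atTop.comp tendsto_natCast_atTop_atTop).eventually_ge_atTop _
  filter_upwards [hcond.eventually_ge_atTop 1, hlog_ev, eventually_ge_atTop 8]
    with n h1 h2 h3
  have hL : 0 < Real.log n := lt_of_lt_of_le (by positivity) h2
  have hLa : 0 < Real.log n ^ alpha := Real.rpow_pos_of_pos hL _
  have hlam : Real.log n ^ alpha ≤ lam n * (n:ℝ) ^ (1 + alpha) := by
    have h4 := (one_le_div hLa).mp h1
    linarith
  have hm1 : 1 ≤ n / 2 := by omega
  have hmn : n / 2 ≤ n := by omega
  have hsub := clique_subsol (n := n) (m := n / 2) (lam := lam n) (alpha := alpha)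
    (hpos n) hm1 hmn
  have hW := cliqueW_lower n (lam n) alpha ha h3 h2 hlam
  calc ENNReal.ofReal ((2:ℝ) ^ ((1/8 : ℝ) * n))
      ≤ ENNReal.ofReal (cliqueW n (lam n) alpha (n / 2) 0) :=
        ENNReal.ofReal_le_ofReal hW
    _ ≤ cliqueET n (lam n) alpha 1 := hsub
end

section
/- Let α > 0 be fixed and let λ : ℕ → ℝ_{>0} satisfy λ(n)·n^{1+α} → 0 as n → ∞ (i.e. λ ∈ o(n^{−1−α})). For each n, let T_n be the survival time of the clique infection chain on {0,…,n} with parameters λ(n), α, started at X₀ = 1. Then E[T_n] is bounded above by a constant independent of n. -/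
open scoped ENNReal
open Filter Asymptotics

/-! ### Auxiliary definitions -/

noncomputable def cbb (n : ℕ) (lam alpha : ℝ) (I : ℕ) : ℝ :=
  lam * (I : ℝ) ^ (1 + alpha) * ((n : ℝ) - I)

noncomputable def cpu (n : ℕ) (lam alpha : ℝ) (I : ℕ) : ℝ :=
  cbb n lam alpha I / (cbb n lam alpha I + I)

noncomputable def cpd (n : ℕ) (lam alpha : ℝ) (I : ℕ) : ℝ :=
  (I : ℝ) / (cbb n lam alpha I + I)

noncomputable def ubar (n : ℕ) (lam alpha : ℝ) : ℕ → ℝ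
  | 0 => 0
  | m + 1 => (1 + cpu n lam alpha (n - m) * ubar n lam alpha m) / cpd n lam alpha (n - m)

noncomputable def uu (n : ℕ) (lam alpha : ℝ) (I : ℕ) : ℝ := ubar n lam alpha (n + 1 - I)

noncomputable def VV (n : ℕ) (lam alpha : ℝ) (J : ℕ) : ℝ :=
  ∑ k ∈ Finset.Icc 1 J, uu n lam alpha k

/-! ### tsum helpers -/

lemma tsum_single_aux (f : ℕ → ℝ≥0∞) (a : ℕ) (A : ℝ≥0∞)
    (hf : ∀ J, f J = if J = a then A else 0) : ∑' J, f J = A := by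
  rw [tsum_congr hf, tsum_ite_eq]

lemma tsum_pair_aux (f : ℕ → ℝ≥0∞) (a b : ℕ) (A B : ℝ≥0∞) (hab : a ≠ b)
    (hf : ∀ J, f J = if J = a then A else if J = b then B else 0) :
    ∑' J, f J = A + B := by
  have h : ∀ J, f J = (if J = a then A else 0) + (if J = b then B else 0) := by
    intro J
    rw [hf]
    by_cases h1 : J = a
    · subst h1
      simp [hab]
    · simp [h1]
  rw [tsum_congr h, ENNReal.tsum_add, tsum_ite_eq, tsum_ite_eq]

/-! ### Real estimates -/

section Real

variable {n : ℕ} {lam alpha : ℝ}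

lemma cbb_nonneg (hlam : 0 < lam) {I : ℕ} (hI : I ≤ n) : 0 ≤ cbb n lam alpha I := by
  have hIn : (I : ℝ) ≤ n := by exact_mod_cast hI
  have h1 : (0:ℝ) ≤ (I : ℝ) ^ (1 + alpha) := Real.rpow_nonneg (Nat.cast_nonneg I) _
  have h2 : (0:ℝ) ≤ (n : ℝ) - I := by linarith
  exact mul_nonneg (mul_nonneg hlam.le h1) h2

lemma cden_pos (hlam : 0 < lam) {I : ℕ} (h1 : 1 ≤ I) (h2 : I ≤ n) :
    0 < cbb n lam alpha I + I := by
  have := cbb_nonneg (alpha := alpha) hlam h2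
  have : (1:ℝ) ≤ I := by exact_mod_cast h1
  linarith [cbb_nonneg (alpha := alpha) (n := n) hlam h2]

lemma cpd_pos (hlam : 0 < lam) {I : ℕ} (h1 : 1 ≤ I) (h2 : I ≤ n) :
    0 < cpd n lam alpha I := by
  have hden := cden_pos (alpha := alpha) hlam h1 h2
  have : (0:ℝ) < I := by exact_mod_cast h1
  exact div_pos this hden

lemma cpu_nonneg (hlam : 0 < lam) {I : ℕ} (h2 : I ≤ n) :
    0 ≤ cpu n lam alpha I := by
  have hb := cbb_nonneg (alpha := alpha) (n := n) hlam h2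
  have : (0:ℝ) ≤ (I:ℝ) := Nat.cast_nonneg I
  exact div_nonneg hb (by linarith)

lemma cpu_add_cpd (hlam : 0 < lam) {I : ℕ} (h1 : 1 ≤ I) (h2 : I ≤ n) :
    cpu n lam alpha I + cpd n lam alpha I = 1 := by
  have hden := cden_pos (alpha := alpha) hlam h1 h2
  rw [cpu, cpd, ← add_div, div_self hden.ne']

lemma ubar_nonneg (hlam : 0 < lam) : ∀ m, m ≤ n → 0 ≤ ubar n lam alpha m := by
  intro m
  induction m with
  | zero => intro _; simp [ubar]
  | succ m ih =>
    intro hm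
    have hmn : m ≤ n := le_of_lt (Nat.lt_of_succ_le hm)
    have h1 : 1 ≤ n - m := by omega
    have h2 : n - m ≤ n := Nat.sub_le n m
    have hpd := cpd_pos (alpha := alpha) hlam h1 h2
    have hpu := cpu_nonneg (alpha := alpha) hlam h2
    have hu := ih hmn
    rw [ubar]
    apply div_nonneg _ hpd.le
    nlinarith

lemma ubar_le_three (hlam : 0 < lam) (hn : 1 ≤ n)
    (heps : lam * (n : ℝ) ^ (1 + alpha) ≤ 1/2) (halpha : 0 < alpha) :
    ∀ m, m ≤ n → ubar n lam alpha m ≤ 3 := by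
  intro m
  induction m with
  | zero => intro _; simp [ubar]
  | succ m ih =>
    intro hm
    have hmn : m ≤ n := le_of_lt (Nat.lt_of_succ_le hm)
    set I := n - m with hI
    have h1 : 1 ≤ I := by omega
    have h2 : I ≤ n := Nat.sub_le n m
    have hIr : (1:ℝ) ≤ I := by exact_mod_cast h1
    have hIn : (I:ℝ) ≤ n := by exact_mod_cast h2
    have hnr : (1:ℝ) ≤ n := by exact_mod_cast hn
    have hden := cden_pos (alpha := alpha) hlam h1 h2
    have hb0 := cbb_nonneg (alpha := alpha) (n := n) hlam h2
    -- key: cbb ≤ I * (lam * n^(1+alpha)) ≤ I/2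
    have hkey : cbb n lam alpha I ≤ (I:ℝ) * (lam * (n:ℝ) ^ (1 + alpha)) := by
      have hrw : (I:ℝ) ^ (1 + alpha) = (I:ℝ) * (I:ℝ) ^ alpha := by
        rw [Real.rpow_add (by linarith) 1 alpha, Real.rpow_one]
      have hrw2 : (n:ℝ) ^ (1 + alpha) = (n:ℝ) * (n:ℝ) ^ alpha := by
        rw [Real.rpow_add (by linarith) 1 alpha, Real.rpow_one]
      have hmono : (I:ℝ) ^ alpha ≤ (n:ℝ) ^ alpha :=
        Real.rpow_le_rpow (by linarith) hIn halpha.le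
      have hsub : (n:ℝ) - I ≤ n := by linarith
      have hpa : (0:ℝ) ≤ (I:ℝ) ^ alpha := Real.rpow_nonneg (by linarith) _
      calc cbb n lam alpha I ≤ lam * (I:ℝ) ^ (1 + alpha) * n := by
              rw [cbb]
              have : (0:ℝ) ≤ lam * (I:ℝ) ^ (1+alpha) := by positivity
              nlinarith
        _ ≤ (I:ℝ) * (lam * (n:ℝ) ^ (1 + alpha)) := by
              rw [hrw, hrw2]
              have hstep : lam * (n:ℝ) * (I:ℝ) * (I:ℝ) ^ alpha ≤
                  lam * (n:ℝ) * (I:ℝ) * (n:ℝ) ^ alpha := by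
                apply mul_le_mul_of_nonneg_left hmono
                positivity
              nlinarith [hstep]
    have hbI : cbb n lam alpha I ≤ (I:ℝ) * (1/2) := by
      calc cbb n lam alpha I ≤ (I:ℝ) * (lam * (n:ℝ) ^ (1 + alpha)) := hkey
        _ ≤ (I:ℝ) * (1/2) := by nlinarith
    have hu0 := ubar_nonneg (alpha := alpha) hlam m hmn
    have hu3 := ih hmn
    have hpd := cpd_pos (alpha := alpha) hlam h1 h2
    have hbx : cbb n lam alpha I * ubar n lam alpha m ≤ cbb n lam alpha I * 3 :=
      mul_le_mul_of_nonneg_left hu3 hb0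
    rw [ubar, div_le_iff₀ hpd, cpu, cpd]
    rw [← hI]
    have hne := hden.ne'
    rw [div_mul_eq_mul_div, mul_div_assoc']
    rw [add_comm, div_add' _ _ _ hne, div_le_div_iff₀ hden hden]
    nlinarith [hbx, hbI, hden]

lemma uu_rec (hlam : 0 < lam) {I : ℕ} (h1 : 1 ≤ I) (h2 : I ≤ n) :
    cpd n lam alpha I * uu n lam alpha I = 1 + cpu n lam alpha I * uu n lam alpha (I + 1) := by
  have hm : n + 1 - I = (n - I) + 1 := by omega
  have hnm : n - (n - I) = I := by omega
  have hm2 : n + 1 - (I + 1) = n - I := by omega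
  have hpd := cpd_pos (alpha := alpha) hlam h1 h2
  rw [uu, uu, hm, hm2, ubar, hnm]
  field_simp

lemma uu_nonneg (hlam : 0 < lam) {k : ℕ} (hk : 1 ≤ k) : 0 ≤ uu n lam alpha k := by
  rw [uu]
  exact ubar_nonneg (alpha := alpha) hlam _ (by omega)

lemma VV_nonneg (hlam : 0 < lam) (J : ℕ) : 0 ≤ VV n lam alpha J := by
  apply Finset.sum_nonneg
  intro k hk
  exact uu_nonneg hlam (Finset.mem_Icc.mp hk).1

lemma VV_succ (J : ℕ) : VV n lam alpha (J + 1) = VV n lam alpha J + uu n lam alpha (J + 1) :=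
  Finset.sum_Icc_succ_top (by omega) _

lemma VV_zero : VV n lam alpha 0 = 0 := by simp [VV]

lemma VV_one : VV n lam alpha 1 = uu n lam alpha 1 := by simp [VV]

lemma VV_drift (hlam : 0 < lam) {I : ℕ} (h1 : 1 ≤ I) (h2 : I ≤ n) :
    VV n lam alpha (I + 1) * cpu n lam alpha I + VV n lam alpha (I - 1) * cpd n lam alpha I + 1
      = VV n lam alpha I := by
  have hVp := VV_succ (n := n) (lam := lam) (alpha := alpha) I
  have hVm : VV n lam alpha I = VV n lam alpha (I - 1) + uu n lam alpha I := by
    have h : I - 1 + 1 = I := by omega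
    calc VV n lam alpha I = VV n lam alpha ((I - 1) + 1) := by rw [h]
      _ = VV n lam alpha (I - 1) + uu n lam alpha ((I - 1) + 1) := VV_succ _
      _ = VV n lam alpha (I - 1) + uu n lam alpha I := by rw [h]
  have hrec := uu_rec (alpha := alpha) hlam h1 h2
  have hsum := cpu_add_cpd (alpha := alpha) hlam h1 h2
  linear_combination cpu n lam alpha I * hVp - cpd n lam alpha I * hVm +
    VV n lam alpha I * hsum - hrec

end Real

/-! ### Chain lemmas (ENNReal) -/

section Chain

variable {n : ℕ} {lam alpha : ℝ}

lemma step_absorb {I : ℕ} (h : I = 0 ∨ n < I) :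
    cliqueStep n lam alpha I = fun J => if J = I then 1 else 0 := by
  rw [cliqueStep, if_pos h]

lemma step_eq {I : ℕ} (h1 : 1 ≤ I) (h2 : I ≤ n) :
    cliqueStep n lam alpha I = fun J =>
      if J = I + 1 then ENNReal.ofReal (cpu n lam alpha I)
      else if J = I - 1 then ENNReal.ofReal (cpd n lam alpha I) else 0 := by
  rw [cliqueStep, if_neg (by omega)]
  rfl

lemma cpu_top : cpu n lam alpha n = 0 := by
  have : cbb n lam alpha n = 0 := by simp [cbb]
  rw [cpu, this, zero_div]

lemma dist_succ (t J : ℕ) : cliqueDist n lam alpha 1 (t + 1) J =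
    ∑' I, cliqueDist n lam alpha 1 t I * cliqueStep n lam alpha I J := rfl

lemma dist_zero_aux (J : ℕ) : cliqueDist n lam alpha 1 0 J = if J = 1 then 1 else 0 := rfl

lemma dist_supp (hn : 1 ≤ n) : ∀ t J, n < J → cliqueDist n lam alpha 1 t J = 0 := by
  intro t
  induction t with
  | zero =>
    intro J hJ
    rw [dist_zero_aux, if_neg (by omega)]
  | succ t ih =>
    intro J hJ
    rw [dist_succ]
    rw [ENNReal.tsum_eq_zero]
    intro I
    by_cases h : I = 0 ∨ n < I
    · rcases h with h | h
      · subst h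
        rw [step_absorb (Or.inl rfl)]
        simp only [if_neg (by omega : ¬ J = 0), mul_zero]
      · rw [ih I h, zero_mul]
    · push_neg at h
      have h1 : 1 ≤ I := Nat.one_le_iff_ne_zero.mpr h.1
      have h2 : I ≤ n := h.2
      rw [step_eq h1 h2]
      by_cases hj : J = I + 1
      · have hIn : I = n := by omega
        subst hIn
        simp only [if_pos hj, cpu_top, ENNReal.ofReal_zero, mul_zero]
      · simp only [if_neg hj, if_neg (by omega : ¬ J = I - 1), mul_zero]

lemma cpd_nonneg (hlam : 0 < lam) {I : ℕ} (h1 : 1 ≤ I) (h2 : I ≤ n) :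
    0 ≤ cpd n lam alpha I :=
  (cpd_pos (alpha := alpha) hlam h1 h2).le

lemma row_sum (hlam : 0 < lam) (I : ℕ) : ∑' J, cliqueStep n lam alpha I J = 1 := by
  by_cases h : I = 0 ∨ n < I
  · exact tsum_single_aux _ I 1 (fun J => by rw [step_absorb h])
  · push_neg at h
    have h1 : 1 ≤ I := Nat.one_le_iff_ne_zero.mpr h.1
    have h2 : I ≤ n := h.2
    rw [tsum_pair_aux _ (I + 1) (I - 1) (ENNReal.ofReal (cpu n lam alpha I))
      (ENNReal.ofReal (cpd n lam alpha I)) (by omega) (fun J => by rw [step_eq h1 h2])]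
    rw [← ENNReal.ofReal_add (cpu_nonneg (alpha := alpha) hlam h2) (cpd_nonneg hlam h1 h2),
      cpu_add_cpd (alpha := alpha) hlam h1 h2, ENNReal.ofReal_one]

lemma dist_mass (hlam : 0 < lam) : ∀ t, ∑' J, cliqueDist n lam alpha 1 t J = 1 := by
  intro t
  induction t with
  | zero => exact tsum_single_aux _ 1 1 (fun J => rfl)
  | succ t ih =>
    calc ∑' J, cliqueDist n lam alpha 1 (t + 1) J
        = ∑' J, ∑' I, cliqueDist n lam alpha 1 t I * cliqueStep n lam alpha I J :=
          tsum_congr (fun J => dist_succ t J)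
      _ = ∑' I, ∑' J, cliqueDist n lam alpha 1 t I * cliqueStep n lam alpha I J :=
          ENNReal.tsum_comm
      _ = ∑' I, cliqueDist n lam alpha 1 t I * ∑' J, cliqueStep n lam alpha I J :=
          tsum_congr (fun I => ENNReal.tsum_mul_left)
      _ = ∑' I, cliqueDist n lam alpha 1 t I := by
          refine tsum_congr (fun I => ?_)
          rw [row_sum hlam, mul_one]
      _ = 1 := ih

end Chain

noncomputable def Phi (n : ℕ) (lam alpha : ℝ) (t : ℕ) : ℝ≥0∞ :=
  ∑' J, ENNReal.ofReal (VV n lam alpha J) * cliqueDist n lam alpha 1 t J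

noncomputable def Psi (n : ℕ) (lam alpha : ℝ) (t : ℕ) : ℝ≥0∞ :=
  ∑' J, (if J = 0 then 0 else cliqueDist n lam alpha 1 t J)

section Drift

variable {n : ℕ} {lam alpha : ℝ}

lemma stepInnerSum (hlam : 0 < lam) {I : ℕ} (h1 : 1 ≤ I) (h2 : I ≤ n) :
    ∑' J, ENNReal.ofReal (VV n lam alpha J) * cliqueStep n lam alpha I J
      = ENNReal.ofReal (VV n lam alpha (I + 1)) * ENNReal.ofReal (cpu n lam alpha I)
        + ENNReal.ofReal (VV n lam alpha (I - 1)) * ENNReal.ofReal (cpd n lam alpha I) := by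
  apply tsum_pair_aux _ (I + 1) (I - 1) _ _ (by omega)
  intro J
  rw [step_eq h1 h2]
  by_cases hj : J = I + 1
  · subst hj; simp
  · by_cases hj2 : J = I - 1
    · subst hj2; simp [hj]
    · simp [hj, hj2]

lemma stepInnerKey (hlam : 0 < lam) {I : ℕ} (h1 : 1 ≤ I) (h2 : I ≤ n) :
    (∑' J, ENNReal.ofReal (VV n lam alpha J) * cliqueStep n lam alpha I J) + 1
      = ENNReal.ofReal (VV n lam alpha I) := by
  rw [stepInnerSum hlam h1 h2]
  rw [← ENNReal.ofReal_mul (VV_nonneg hlam _), ← ENNReal.ofReal_mul (VV_nonneg hlam _),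
    ← ENNReal.ofReal_one,
    ← ENNReal.ofReal_add
      (mul_nonneg (VV_nonneg hlam _) (cpu_nonneg (alpha := alpha) hlam h2))
      (mul_nonneg (VV_nonneg hlam _) (cpd_nonneg hlam h1 h2)),
    ← ENNReal.ofReal_add
      (add_nonneg (mul_nonneg (VV_nonneg hlam _) (cpu_nonneg (alpha := alpha) hlam h2))
        (mul_nonneg (VV_nonneg hlam _) (cpd_nonneg hlam h1 h2))) (by norm_num)]
  exact congrArg ENNReal.ofReal (VV_drift hlam h1 h2)

lemma Phi_step (hlam : 0 < lam) (hn : 1 ≤ n) (t : ℕ) :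
    Phi n lam alpha (t + 1) + Psi n lam alpha t ≤ Phi n lam alpha t := by
  have hrw : Phi n lam alpha (t + 1) = ∑' I, cliqueDist n lam alpha 1 t I *
      ∑' J, ENNReal.ofReal (VV n lam alpha J) * cliqueStep n lam alpha I J := by
    rw [Phi]
    calc ∑' J, ENNReal.ofReal (VV n lam alpha J) * cliqueDist n lam alpha 1 (t + 1) J
        = ∑' J, ∑' I, ENNReal.ofReal (VV n lam alpha J) *
            (cliqueDist n lam alpha 1 t I * cliqueStep n lam alpha I J) := by
          refine tsum_congr fun J => ?_
          rw [dist_succ, ENNReal.tsum_mul_left]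
      _ = ∑' I, ∑' J, ENNReal.ofReal (VV n lam alpha J) *
            (cliqueDist n lam alpha 1 t I * cliqueStep n lam alpha I J) := ENNReal.tsum_comm
      _ = ∑' I, cliqueDist n lam alpha 1 t I *
            ∑' J, ENNReal.ofReal (VV n lam alpha J) * cliqueStep n lam alpha I J := by
          refine tsum_congr fun I => ?_
          rw [← ENNReal.tsum_mul_left]
          exact tsum_congr fun J => by ring
  rw [hrw, Psi, ← ENNReal.tsum_add, Phi]
  refine ENNReal.tsum_le_tsum fun I => ?_
  by_cases hI0 : I = 0
  · subst hI0
    have hinner : ∑' J, ENNReal.ofReal (VV n lam alpha J) * cliqueStep n lam alpha 0 J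
        = ENNReal.ofReal (VV n lam alpha 0) := by
      apply tsum_single_aux _ 0
      intro J
      rw [step_absorb (Or.inl rfl)]
      by_cases hj : J = 0
      · subst hj; simp
      · simp [hj]
    rw [hinner, VV_zero, ENNReal.ofReal_zero, mul_zero, zero_mul, if_pos rfl, add_zero]
  · by_cases hIn : n < I
    · rw [dist_supp hn t I hIn]
      simp [hI0]
    · have h1 : 1 ≤ I := Nat.one_le_iff_ne_zero.mpr hI0
      have h2 : I ≤ n := not_lt.mp hIn
      rw [if_neg hI0]
      calc cliqueDist n lam alpha 1 t I *
            (∑' J, ENNReal.ofReal (VV n lam alpha J) * cliqueStep n lam alpha I J)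
            + cliqueDist n lam alpha 1 t I
          = cliqueDist n lam alpha 1 t I *
            ((∑' J, ENNReal.ofReal (VV n lam alpha J) * cliqueStep n lam alpha I J) + 1) := by
            rw [mul_add, mul_one]
        _ = cliqueDist n lam alpha 1 t I * ENNReal.ofReal (VV n lam alpha I) := by
            rw [stepInnerKey hlam h1 h2]
        _ = ENNReal.ofReal (VV n lam alpha I) * cliqueDist n lam alpha 1 t I := mul_comm _ _
        _ ≤ ENNReal.ofReal (VV n lam alpha I) * cliqueDist n lam alpha 1 t I := le_rfl

lemma Phi_partial (hlam : 0 < lam) (hn : 1 ≤ n) :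
    ∀ t, (∑ s ∈ Finset.range t, Psi n lam alpha s) + Phi n lam alpha t ≤ Phi n lam alpha 0 := by
  intro t
  induction t with
  | zero => simp
  | succ t ih =>
    rw [Finset.sum_range_succ]
    calc (∑ s ∈ Finset.range t, Psi n lam alpha s) + Psi n lam alpha t + Phi n lam alpha (t + 1)
        = (∑ s ∈ Finset.range t, Psi n lam alpha s)
            + (Phi n lam alpha (t + 1) + Psi n lam alpha t) := by ring
      _ ≤ (∑ s ∈ Finset.range t, Psi n lam alpha s) + Phi n lam alpha t :=
          add_le_add_right (Phi_step hlam hn t) _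
      _ ≤ Phi n lam alpha 0 := ih

lemma Phi_zero_eq (hlam : 0 < lam) :
    Phi n lam alpha 0 = ENNReal.ofReal (ubar n lam alpha n) := by
  have h : Phi n lam alpha 0 = ENNReal.ofReal (VV n lam alpha 1) := by
    apply tsum_single_aux _ 1
    intro J
    rw [dist_zero_aux]
    by_cases hj : J = 1
    · subst hj; simp
    · simp [hj]
  rw [h, VV_one, uu, Nat.add_sub_cancel]

lemma tsum_Psi_le (hlam : 0 < lam) (hn : 1 ≤ n) :
    ∑' t, Psi n lam alpha t ≤ Phi n lam alpha 0 := by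
  rw [ENNReal.tsum_eq_iSup_nat]
  refine iSup_le fun t => ?_
  exact le_trans le_self_add (Phi_partial hlam hn t)

set_option maxHeartbeats 1000000 in
lemma cliqueET_le (hlam : 0 < lam) (hn : 1 ≤ n) :
    cliqueET n lam alpha 1 ≤ ENNReal.ofReal (ubar n lam alpha n) := by
  rw [cliqueET]
  have h1 : ∀ t, 1 - cliqueDist n lam alpha 1 t 0 ≤ Psi n lam alpha t := by
    intro t
    rw [tsub_le_iff_right]
    have hmass : (1 : ℝ≥0∞) = cliqueDist n lam alpha 1 t 0 + Psi n lam alpha t := by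
      have h := ENNReal.tsum_eq_add_tsum_ite (f := cliqueDist n lam alpha 1 t) 0
      rw [dist_mass (n := n) (alpha := alpha) hlam t] at h
      rw [Psi]
      exact h.trans (by congr 1; exact tsum_congr fun J => by by_cases hj : J = 0 <;> simp [hj])
    exact le_of_eq (hmass.trans (add_comm _ _))
  calc ∑' t, (1 - cliqueDist n lam alpha 1 t 0) ≤ ∑' t, Psi n lam alpha t :=
        ENNReal.tsum_le_tsum h1
    _ ≤ Phi n lam alpha 0 := tsum_Psi_le hlam hn
    _ = ENNReal.ofReal (ubar n lam alpha n) := Phi_zero_eq hlam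

end Drift

/-- For super-linear scaling with λ ∈ o(n^{-1-α}), the expected survival
time of the clique infection chain started at 1 is bounded by a constant. -/
theorem clique_superlinear_survival_upper (alpha : ℝ) (ha : 0 < alpha)
    (lam : ℕ → ℝ) (hpos : ∀ n, 0 < lam n)
    (hcond : Tendsto (fun n : ℕ => lam n * (n : ℝ) ^ (1 + alpha)) atTop (nhds 0)) :
    ∃ C : ℝ, ∀ n : ℕ, 1 ≤ n → cliqueET n (lam n) alpha 1 ≤ ENNReal.ofReal C := by
  have hev : ∀ᶠ k in atTop, lam k * (k : ℝ) ^ (1 + alpha) < 1/2 :=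
    hcond.eventually_lt_const (by norm_num)
  obtain ⟨N, hN⟩ := eventually_atTop.mp hev
  refine ⟨3 + ∑ k ∈ Finset.range N, max (ubar k (lam k) alpha k) 0, ?_⟩
  intro n hn
  have hbase := cliqueET_le (n := n) (lam := lam n) (alpha := alpha) (hpos n) hn
  refine hbase.trans (ENNReal.ofReal_le_ofReal ?_)
  have hsum0 : (0:ℝ) ≤ ∑ k ∈ Finset.range N, max (ubar k (lam k) alpha k) 0 :=
    Finset.sum_nonneg fun k _ => le_max_right _ _
  by_cases hNn : N ≤ n
  · have h3 : ubar n (lam n) alpha n ≤ 3 :=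
      ubar_le_three (hpos n) hn (le_of_lt (hN n hNn)) ha n le_rfl
    linarith
  · push_neg at hNn
    have hle : max (ubar n (lam n) alpha n) 0 ≤
        ∑ k ∈ Finset.range N, max (ubar k (lam k) alpha k) 0 :=
      Finset.single_le_sum (f := fun k => max (ubar k (lam k) alpha k) 0)
        (fun k _ => le_max_right _ _) (Finset.mem_range.mpr hNn)
    have := le_max_left (ubar n (lam n) alpha n) 0
    linarith
end

section
/- Let n ≥ 1 be an integer, λ > 0, α > −1, and let x, y be integers with 0 ≤ y < x ≤ n. In the star infection chain started at the state (0,x) (center healthy, x infected leaves), the probability p that the chain reaches a state with y infected leaves before the center becomes infected (i.e. before the first coordinate becomes 1) equals ∏_{i=y+1}^{x} 1/(1+λ·i^α). Moreover, setting z = y if α ≥ 0 and z = x if α < 0, if λ·z^α ≤ 1 then p ≤ exp(−(x−y)·λ·z^α/2). -/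
open scoped ENNReal
open Filter Asymptotics

noncomputable def starStep (n : ℕ) (lam alpha : ℝ) : Bool × ℕ → Bool × ℕ → ℝ≥0∞
  | (false, I) =>
    if I = 0 ∨ n < I then fun J => if J = ((false : Bool), I) then 1 else 0
    else fun J =>
      if J = (false, I - 1) then
        ENNReal.ofReal ((I : ℝ) / ((I : ℝ) + lam * (I : ℝ) ^ (1 + alpha)))
      else if J = (true, I) then
        ENNReal.ofReal (lam * (I : ℝ) ^ (1 + alpha) / ((I : ℝ) + lam * (I : ℝ) ^ (1 + alpha)))
      else 0
  | (true, I) =>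
    if n < I then fun J => if J = ((true : Bool), I) then 1 else 0
    else fun J =>
      if J = (true, I + 1) then
        ENNReal.ofReal (lam * ((n : ℝ) - I) / (lam * ((n : ℝ) - I) + I + 1))
      else if J = (true, I - 1) then
        ENNReal.ofReal ((I : ℝ) / (lam * ((n : ℝ) - I) + I + 1))
      else if J = (false, I) then
        ENNReal.ofReal (1 / (lam * ((n : ℝ) - I) + I + 1))
      else 0

noncomputable def starDist (n : ℕ) (lam alpha : ℝ) (s0 : Bool × ℕ) :
    ℕ → Bool × ℕ → ℝ≥0∞ :=
  markovDist (starStep n lam alpha) s0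

noncomputable def starET (n : ℕ) (lam alpha : ℝ) (s0 : Bool × ℕ) : ℝ≥0∞ :=
  ∑' t : ℕ, (1 - starDist n lam alpha s0 t ((false : Bool), 0))


section starAux
variable {S : Type*} [DecidableEq S]

private lemma markovDist_zero' (step : S → S → ℝ≥0∞) (s0 J : S) :
    markovDist step s0 0 J = if J = s0 then 1 else 0 := rfl

private lemma markovDist_succ' (step : S → S → ℝ≥0∞) (s0 : S) (t : ℕ) (J : S) :
    markovDist step s0 (t+1) J = ∑' s, markovDist step s0 t s * step s J := rfl

private lemma markovDist_first_step' (step : S → S → ℝ≥0∞) :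
    ∀ (t : ℕ) (s0 J : S),
      markovDist step s0 (t+1) J = ∑' s, step s0 s * markovDist step s t J := by
  intro t
  induction t with
  | zero =>
    intro s0 J
    rw [markovDist_succ']
    rw [tsum_eq_single s0 (by intro b hb; rw [markovDist_zero', if_neg hb, zero_mul])]
    rw [markovDist_zero', if_pos rfl, one_mul]
    rw [tsum_eq_single J (by intro b hb; rw [markovDist_zero', if_neg (Ne.symm hb), mul_zero])]
    rw [markovDist_zero', if_pos rfl, mul_one]
  | succ t ih =>
    intro s0 J
    rw [markovDist_succ']
    calc (∑' s, markovDist step s0 (t+1) s * step s J)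
        = ∑' s, (∑' u, step s0 u * markovDist step u t s) * step s J := by
          congr 1; funext s; rw [ih]
      _ = ∑' s, ∑' u, step s0 u * markovDist step u t s * step s J := by
          congr 1; funext s; rw [ENNReal.tsum_mul_right]
      _ = ∑' u, ∑' s, step s0 u * markovDist step u t s * step s J := ENNReal.tsum_comm
      _ = ∑' u, step s0 u * ∑' s, markovDist step u t s * step s J := by
          congr 1; funext u
          rw [← ENNReal.tsum_mul_left]; congr 1; funext s; ring
      _ = ∑' u, step s0 u * markovDist step u (t+1) J := rfl

private lemma markovDist_of_absorbed' (step : S → S → ℝ≥0∞) (s0 : S)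
    (h : ∀ J, step s0 J = if J = s0 then 1 else 0) :
    ∀ (t : ℕ) (J : S), markovDist step s0 t J = if J = s0 then 1 else 0 := by
  intro t
  induction t with
  | zero => intro J; rfl
  | succ t ih =>
    intro J
    rw [markovDist_first_step']
    rw [tsum_eq_single s0 (by intro b hb; rw [h, if_neg hb, zero_mul])]
    rw [h, if_pos rfl, one_mul, ih]

end starAux

private lemma T_at_target (n y : ℕ) (lam alpha : ℝ) (J : Bool × ℕ) :
    absorbStep {((false:Bool), y)} (absorbStep {s : Bool × ℕ | s.1 = true} (starStep n lam alpha))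
      ((false:Bool), y) J = if J = ((false:Bool), y) then 1 else 0 := by
  unfold absorbStep
  rw [if_pos (Set.mem_singleton _)]
  simp

private lemma T_at_true (n y : ℕ) (lam alpha : ℝ) (I : ℕ) (J : Bool × ℕ) :
    absorbStep {((false:Bool), y)} (absorbStep {s : Bool × ℕ | s.1 = true} (starStep n lam alpha))
      ((true:Bool), I) J = if J = ((true:Bool), I) then 1 else 0 := by
  unfold absorbStep
  rw [if_neg (by simp), if_pos (by simp)]
  simp

private lemma T_at_mid (n y I : ℕ) (lam alpha : ℝ) (hI : y < I) (hIn : I ≤ n) (J : Bool × ℕ) :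
    absorbStep {((false:Bool), y)} (absorbStep {s : Bool × ℕ | s.1 = true} (starStep n lam alpha))
      ((false:Bool), I) J =
      if J = ((false:Bool), I - 1) then
        ENNReal.ofReal ((I : ℝ) / ((I : ℝ) + lam * (I : ℝ) ^ (1 + alpha)))
      else if J = ((true:Bool), I) then
        ENNReal.ofReal (lam * (I : ℝ) ^ (1 + alpha) / ((I : ℝ) + lam * (I : ℝ) ^ (1 + alpha)))
      else 0 := by
  unfold absorbStep
  rw [if_neg (by simp only [Set.mem_singleton_iff, Prod.mk.injEq]; omega),
      if_neg (by simp)]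
  show starStep n lam alpha (false, I) J = _
  simp only [starStep]
  rw [if_neg (by omega)]

private lemma factor_eq' (lam alpha : ℝ) {I : ℕ} (hI : 1 ≤ I) :
    (I:ℝ) / ((I:ℝ) + lam * (I:ℝ)^(1+alpha)) = 1 / (1 + lam * (I:ℝ)^alpha) := by
  have hI0 : (0:ℝ) < I := by exact_mod_cast hI
  have h1 : (I:ℝ)^(1+alpha) = I * (I:ℝ)^alpha := by
    rw [Real.rpow_add hI0, Real.rpow_one]
  rw [h1, show (I:ℝ) + lam * ((I:ℝ) * (I:ℝ)^alpha) = (I:ℝ) * (1 + lam * (I:ℝ)^alpha) by ring,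
    div_mul_eq_div_div, div_self hI0.ne']

private lemma star_mass (n y : ℕ) (lam alpha : ℝ) (hlam : 0 < lam) :
    ∀ (t I : ℕ), y ≤ I → I ≤ n →
    markovDist (absorbStep {((false:Bool), y)}
        (absorbStep {s : Bool × ℕ | s.1 = true} (starStep n lam alpha)))
      ((false:Bool), I) t ((false:Bool), y)
      = if I - y ≤ t then
          ENNReal.ofReal (∏ i ∈ Finset.Icc (y+1) I, 1/(1+lam*(i:ℝ)^alpha)) else 0 := by
  set T := absorbStep {((false:Bool), y)}
      (absorbStep {s : Bool × ℕ | s.1 = true} (starStep n lam alpha)) with hT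
  intro t
  induction t with
  | zero =>
    intro I hyI hIn
    rcases eq_or_lt_of_le hyI with h | h
    · subst h
      rw [markovDist_zero', if_pos rfl, if_pos (by omega)]
      simp
    · rw [markovDist_zero', if_neg (by simp only [Prod.mk.injEq]; omega),
        if_neg (by omega)]
  | succ t ih =>
    intro I hyI hIn
    rcases eq_or_lt_of_le hyI with h | h
    · subst h
      rw [markovDist_of_absorbed' T _ (T_at_target _ _ lam alpha), if_pos rfl,
        if_pos (by omega)]
      simp
    · have hI1 : 1 ≤ I := by omega
      rw [markovDist_first_step']
      have hsupp : ∀ b : Bool × ℕ,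
          b ∉ ({((false:Bool), I-1), ((true:Bool), I)} : Finset (Bool × ℕ)) →
          T ((false:Bool), I) b * markovDist T b t ((false:Bool), y) = 0 := by
        intro b hb
        simp only [Finset.mem_insert, Finset.mem_singleton] at hb
        push_neg at hb
        rw [hT, T_at_mid n y I lam alpha h hIn, if_neg hb.1, if_neg hb.2, zero_mul]
      rw [tsum_eq_sum hsupp, Finset.sum_pair (by simp)]
      have h2 : markovDist T ((true:Bool), I) t ((false:Bool), y) = 0 := by
        rw [markovDist_of_absorbed' T _ (T_at_true n y lam alpha I), if_neg (by simp)]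
      rw [h2, mul_zero, add_zero, hT, T_at_mid n y I lam alpha h hIn, if_pos rfl, ← hT]
      rw [ih (I-1) (by omega) (by omega)]
      by_cases hc : I - y ≤ t + 1
      · rw [if_pos (by omega), if_pos hc]
        have hprod : ∀ i ∈ Finset.Icc (y+1) (I-1), (0:ℝ) ≤ 1/(1+lam*(i:ℝ)^alpha) := by
          intro i hi
          simp only [Finset.mem_Icc] at hi
          have : (0:ℝ) < (i:ℝ)^alpha :=
            Real.rpow_pos_of_pos (by exact_mod_cast by omega : (0:ℝ) < i) _
          positivity
        rw [← ENNReal.ofReal_mul (by positivity)]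
        congr 1
        rw [factor_eq' lam alpha hI1]
        rw [show I = (I-1)+1 by omega, Finset.prod_Icc_succ_top (by omega)]
        rw [show (I-1)+1 = I by omega]
        ring
      · rw [if_neg (by omega), if_neg hc, mul_zero]

private lemma one_div_le_exp_half (c : ℝ) (hc0 : 0 ≤ c) (hc1 : c ≤ 1) :
    1 / (1 + c) ≤ Real.exp (-(c/2)) := by
  have he : Real.exp (1/2) * Real.exp (1/2) = Real.exp 1 := by
    rw [← Real.exp_add]; norm_num
  have h2 : Real.exp (1/2) ≤ 2 := by
    nlinarith [Real.exp_one_lt_d9, Real.exp_pos (1/2)]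
  have hconv := convexOn_exp.2 (Set.mem_univ (0:ℝ)) (Set.mem_univ (1/2:ℝ))
    (by linarith : (0:ℝ) ≤ 1 - c) hc0 (by ring)
  simp only [smul_eq_mul, mul_zero, zero_add, Real.exp_zero] at hconv
  have hkey : Real.exp (c/2) ≤ 1 + c := by
    calc Real.exp (c/2) = Real.exp (c * (1/2)) := by ring_nf
      _ ≤ (1-c) * 1 + c * Real.exp (1/2) := hconv
      _ ≤ 1 + c := by nlinarith
  rw [Real.exp_neg]
  rw [one_div, ← one_div (Real.exp (c/2)), ← one_div (1+c)]
  exact one_div_le_one_div_of_le (Real.exp_pos _) hkey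

private theorem star_drop_aux (n x y : ℕ) (lam alpha : ℝ)
    (hn : 1 ≤ n) (hlam : 0 < lam) (ha : -1 < alpha) (hyx : y < x) (hxn : x ≤ n) :
    (⨆ t : ℕ, ∑' s : Bool × ℕ, ({((false:Bool), y)} : Set (Bool × ℕ)).indicator
        (markovDist (absorbStep {((false:Bool), y)}
          (absorbStep {s : Bool × ℕ | s.1 = true} (starStep n lam alpha))) ((false:Bool), x) t) s) =
      ENNReal.ofReal (∏ i ∈ Finset.Icc (y + 1) x, 1 / (1 + lam * (i : ℝ) ^ alpha)) ∧
    (lam * (if 0 ≤ alpha then (y : ℝ) else (x : ℝ)) ^ alpha ≤ 1 →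
      (⨆ t : ℕ, ∑' s : Bool × ℕ, ({((false:Bool), y)} : Set (Bool × ℕ)).indicator
        (markovDist (absorbStep {((false:Bool), y)}
          (absorbStep {s : Bool × ℕ | s.1 = true} (starStep n lam alpha))) ((false:Bool), x) t) s) ≤
        ENNReal.ofReal (Real.exp
          (-(((x : ℝ) - y) * (lam * (if 0 ≤ alpha then (y : ℝ) else (x : ℝ)) ^ alpha) / 2)))) := by
  set T := absorbStep {((false:Bool), y)}
      (absorbStep {s : Bool × ℕ | s.1 = true} (starStep n lam alpha)) with hT
  set P := ENNReal.ofReal (∏ i ∈ Finset.Icc (y + 1) x, 1 / (1 + lam * (i : ℝ) ^ alpha)) with hP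
  have hts : ∀ t : ℕ, (∑' s : Bool × ℕ, ({((false:Bool), y)} : Set (Bool × ℕ)).indicator
      (markovDist T ((false:Bool), x) t) s)
      = markovDist T ((false:Bool), x) t ((false:Bool), y) := by
    intro t
    rw [tsum_eq_single ((false:Bool), y)
      (by intro b hb; exact Set.indicator_of_notMem (by simpa using hb) _)]
    exact Set.indicator_of_mem rfl _
  have hmass := star_mass n y lam alpha hlam
  have hmain : (⨆ t : ℕ, ∑' s : Bool × ℕ, ({((false:Bool), y)} : Set (Bool × ℕ)).indicator
      (markovDist T ((false:Bool), x) t) s) = P := by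
    apply le_antisymm
    · refine iSup_le fun t => ?_
      rw [hts t, hmass t x (le_of_lt hyx) hxn]
      split
      · exact le_refl _
      · exact zero_le
    · refine le_trans ?_ (le_iSup _ (x - y))
      rw [hts, hmass (x-y) x (le_of_lt hyx) hxn, if_pos (le_refl _)]
  refine ⟨hmain, fun hz => ?_⟩
  rw [hmain, hP]
  apply ENNReal.ofReal_le_ofReal
  set z : ℝ := if 0 ≤ alpha then (y : ℝ) else (x : ℝ) with hzdef
  have hz0 : (0:ℝ) ≤ z := by rw [hzdef]; split <;> positivity
  set c : ℝ := lam * z ^ alpha with hcdef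
  have hc0 : 0 ≤ c := by
    have := Real.rpow_nonneg hz0 alpha
    positivity
  have hfac : ∀ i ∈ Finset.Icc (y+1) x, 1 / (1 + lam * (i:ℝ)^alpha) ≤ Real.exp (-(c/2)) := by
    intro i hi
    simp only [Finset.mem_Icc] at hi
    have hi0 : (0:ℝ) < i := by exact_mod_cast (by omega : 0 < i)
    have hle : c ≤ lam * (i:ℝ)^alpha := by
      rw [hcdef, hzdef]
      by_cases hA : 0 ≤ alpha
      · rw [if_pos hA]
        exact mul_le_mul_of_nonneg_left
          (Real.rpow_le_rpow (by positivity) (by exact_mod_cast (by omega : y ≤ i)) hA) hlam.le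
      · rw [if_neg hA]
        exact mul_le_mul_of_nonneg_left
          (Real.rpow_le_rpow_of_nonpos hi0 (by exact_mod_cast hi.2) (le_of_not_ge hA)) hlam.le
    calc 1 / (1 + lam * (i:ℝ)^alpha) ≤ 1 / (1 + c) :=
          one_div_le_one_div_of_le (by linarith) (by linarith)
      _ ≤ Real.exp (-(c/2)) := one_div_le_exp_half c hc0 hz
  calc (∏ i ∈ Finset.Icc (y+1) x, 1 / (1 + lam * (i:ℝ)^alpha))
      ≤ ∏ _i ∈ Finset.Icc (y+1) x, Real.exp (-(c/2)) := by
        refine Finset.prod_le_prod (fun i hi => ?_) hfac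
        simp only [Finset.mem_Icc] at hi
        have hi0 : (0:ℝ) < (i:ℝ)^alpha :=
          Real.rpow_pos_of_pos (by exact_mod_cast (by omega : 0 < i)) _
        positivity
    _ = Real.exp (-(c/2)) ^ (x - y) := by
        rw [Finset.prod_const, Nat.card_Icc]
        congr 1
        omega
    _ = Real.exp (-(((x:ℝ) - y) * c / 2)) := by
        rw [← Real.exp_nat_mul]
        congr 1
        rw [Nat.cast_sub hyx.le]
        ring

/-- Starting from x infected leaves and healthy center, the probability of
dropping to y infected leaves before the center gets infected equals
∏_{i=y+1}^{x} 1/(1+λi^α), and is at most exp(−(x−y)·λ·z^α/2) whenever λ·z^α ≤ 1,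
where z = y if α ≥ 0 and z = x otherwise. -/
theorem star_drop_probability (n x y : ℕ) (lam alpha : ℝ)
    (hn : 1 ≤ n) (hlam : 0 < lam) (ha : -1 < alpha) (hyx : y < x) (hxn : x ≤ n) :
    hitProb (absorbStep {s : Bool × ℕ | s.1 = true} (starStep n lam alpha))
        ((false : Bool), x) {((false : Bool), y)} =
      ENNReal.ofReal (∏ i ∈ Finset.Icc (y + 1) x, 1 / (1 + lam * (i : ℝ) ^ alpha)) ∧
    (lam * (if 0 ≤ alpha then (y : ℝ) else (x : ℝ)) ^ alpha ≤ 1 →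
      hitProb (absorbStep {s : Bool × ℕ | s.1 = true} (starStep n lam alpha))
          ((false : Bool), x) {((false : Bool), y)} ≤
        ENNReal.ofReal (Real.exp
          (-(((x : ℝ) - y) * (lam * (if 0 ≤ alpha then (y : ℝ) else (x : ℝ)) ^ alpha) / 2)))) := by
  exact star_drop_aux n x y lam alpha hn hlam ha hyx hxn
end

section
/- Let α > −1 be fixed, let λ : ℕ → (0,1) satisfy λ(n)·n → ∞, and let z : ℕ → ℝ_{>0} satisfy z(n) = o(λ(n)·n) as n → ∞. For each n, consider the star infection chain with n leaves started at a state (1, I₀(n)) with 0 ≤ I₀(n) ≤ λ(n)n/4 − λ(n)n/(4z(n)). Let E_n be the event that the number of infected leaves reaches at least I₀(n) + ⌈λ(n)n/(4z(n))⌉ before the center heals (i.e. before the first coordinate becomes 0). Then there exists a constant C > 0 such that for all sufficiently large n, Pr[E_n] ≥ exp(−C/z(n)). -/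
open scoped ENNReal
open Filter Asymptotics

lemma absorbStep_of_mem {S : Type*} [DecidableEq S] {A : Set S} {step : S → S → ℝ≥0∞}
    {s : S} (h : s ∈ A) :
    absorbStep A step s = fun J => if J = s then 1 else 0 := by
  simp only [absorbStep, if_pos h]
  funext J
  by_cases hJ : J = s <;> simp [hJ]

lemma absorbStep_of_not_mem {S : Type*} {A : Set S} {step : S → S → ℝ≥0∞} {s : S}
    (h : s ∉ A) : absorbStep A step s = step s := by
  simp [absorbStep, h]

lemma starStep_true_lo {n : ℕ} {lam alpha : ℝ} {I : ℕ} (h : I ≤ n) :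
    starStep n lam alpha ((true : Bool), I) = fun J =>
      if J = ((true:Bool), I + 1) then
        ENNReal.ofReal (lam * ((n : ℝ) - I) / (lam * ((n : ℝ) - I) + I + 1))
      else if J = ((true:Bool), I - 1) then
        ENNReal.ofReal ((I : ℝ) / (lam * ((n : ℝ) - I) + I + 1))
      else if J = ((false:Bool), I) then
        ENNReal.ofReal (1 / (lam * ((n : ℝ) - I) + I + 1))
      else 0 := by
  simp only [starStep]
  rw [if_neg (not_lt.mpr h)]

lemma starStep_true_hi {n : ℕ} {lam alpha : ℝ} {I : ℕ} (h : n < I) :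
    starStep n lam alpha ((true : Bool), I) =
      fun J => if J = ((true:Bool), I) then 1 else 0 := by
  simp only [starStep]
  rw [if_pos h]

lemma tsum_triple {S : Type*} (f : S → ℝ≥0∞) (a b c : S) (hab : a ≠ b) (hac : a ≠ c)
    (hbc : b ≠ c) (h0 : ∀ J, J ≠ a → J ≠ b → J ≠ c → f J = 0) :
    ∑' J : S, f J = f a + f b + f c := by
  classical
  rw [tsum_eq_sum (s := {a, b, c})
    (by intro J hJ
        simp only [Finset.mem_insert, Finset.mem_singleton, not_or] at hJ
        exact h0 J hJ.1 hJ.2.1 hJ.2.2)]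
  rw [Finset.sum_insert (by simp [hab, hac]), Finset.sum_insert (by simp [hbc]),
    Finset.sum_singleton, add_assoc]

lemma pair_le_tsum {S : Type*} (f : S → ℝ≥0∞) (a b : S) (hab : a ≠ b) :
    f a + f b ≤ ∑' J : S, f J := by
  classical
  rw [← Finset.sum_pair hab]
  exact ENNReal.sum_le_tsum _

set_option maxHeartbeats 2000000 in
lemma star_master (n : ℕ) (lam alpha : ℝ) (hl0 : 0 < lam) (hl1 : lam < 1)
    (hL : 28 ≤ lam * n) (I0 K : ℕ)
    (hM : ((I0 + K : ℕ) : ℝ) ≤ 3/10 * (lam * n)) :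
    ENNReal.ofReal ((1 - 14 / (lam * n)) ^ K) ≤
      hitProb (absorbStep {s : Bool × ℕ | s.1 = false} (starStep n lam alpha))
        ((true : Bool), I0) {((true : Bool), I0 + K)} := by
  classical
  have hLpos : (0:ℝ) < lam * n := by linarith
  have hnR : (0:ℝ) < n := by nlinarith
  set M : ℕ := I0 + K with hMdef
  have hMnR : (M:ℝ) < n := by nlinarith
  have hMn : M < n := by exact_mod_cast hMnR
  set ε : ℝ := 14 / (lam * n) with hεdef
  have hε0 : 0 < ε := by positivity
  have hεL : ε * (lam * n) = 14 := div_mul_cancel₀ _ hLpos.ne'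
  have hεhalf : ε ≤ 1/2 := by
    rw [hεdef, div_le_iff₀ hLpos]; linarith
  set θ : ℝ := 1 - ε with hθdef
  have hθ0 : 0 ≤ θ := by simp only [hθdef]; linarith
  have hθ1 : θ ≤ 1 := by simp only [hθdef]; linarith
  set st := starStep n lam alpha with hstdef
  set Q := absorbStep {((true:Bool), M)}
      (absorbStep {s : Bool × ℕ | s.1 = false} st) with hQdef
  set μ := markovDist Q ((true:Bool), I0) with hμdef
  have hμ0 : μ 0 = fun J => if J = ((true:Bool), I0) then 1 else 0 := rfl
  have hμs : ∀ t, μ (t+1) = fun J => ∑' s : Bool × ℕ, μ t s * Q s J := fun t => rfl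
  -- the transient set
  set T : Finset (Bool × ℕ) :=
    ((Finset.range (n+1)).filter (fun I => I ≠ M)).image (fun I => ((true:Bool), I))
    with hTdef
  have hTmem : ∀ s : Bool × ℕ, s ∈ T ↔ s.1 = true ∧ s.2 ≤ n ∧ s.2 ≠ M := by
    rintro ⟨b, I⟩
    constructor
    · intro h
      simp only [hTdef, Finset.mem_image, Finset.mem_filter, Finset.mem_range] at h
      obtain ⟨J, ⟨hJ1, hJ2⟩, hJ3⟩ := h
      obtain ⟨hb, hI⟩ := Prod.mk.injEq .. ▸ hJ3
      subst hI
      exact ⟨hb.symm ▸ rfl, by omega, hJ2⟩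
    · rintro ⟨hb, hIn, hIM⟩
      simp only [hTdef, Finset.mem_image, Finset.mem_filter, Finset.mem_range]
      exact ⟨I, ⟨by omega, hIM⟩, by simp at hb; rw [hb]⟩
  -- positivity of rates
  have hr0 : ∀ I : ℕ, I ≤ n → 0 < lam * ((n:ℝ) - I) + I + 1 := by
    intro I hI
    have h1 : (0:ℝ) ≤ (n:ℝ) - I := by
      have : (I:ℝ) ≤ n := by exact_mod_cast hI
      linarith
    have := mul_nonneg hl0.le h1
    positivity
  -- transition kernel at transient states
  have hQeq : ∀ I : ℕ, I ≤ n → I ≠ M →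
      Q ((true:Bool), I) = fun J =>
        if J = ((true:Bool), I+1) then
          ENNReal.ofReal (lam * ((n:ℝ) - I) / (lam * ((n:ℝ) - I) + I + 1))
        else if J = ((true:Bool), I-1) then
          ENNReal.ofReal ((I:ℝ) / (lam * ((n:ℝ) - I) + I + 1))
        else if J = ((false:Bool), I) then
          ENNReal.ofReal (1 / (lam * ((n:ℝ) - I) + I + 1))
        else 0 := by
    intro I hI hIM
    rw [hQdef, absorbStep_of_not_mem (by simp [hIM]),
      absorbStep_of_not_mem (by simp), hstdef, starStep_true_lo hI]
  have hQabs : ∀ s : Bool × ℕ, s ∉ T → Q s = fun J => if J = s then 1 else 0 := by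
    rintro ⟨b, I⟩ hs
    rw [hTmem] at hs
    push_neg at hs
    by_cases hbM : (b, I) = ((true:Bool), M)
    · rw [hQdef, absorbStep_of_mem (by simp [hbM])]
    · rw [hQdef, absorbStep_of_not_mem (by simpa using hbM)]
      by_cases hbf : b = false
      · rw [absorbStep_of_mem (by simp [hbf])]
      · have hbt : b = true := by cases b <;> simp_all
        subst hbt
        have hIn : n < I := by
          rcases Nat.lt_or_ge n I with h | h
          · exact h
          · exact absurd (hs rfl h) (by simp [Prod.ext_iff] at hbM; exact hbM)
        rw [absorbStep_of_not_mem (by simp), hstdef, starStep_true_hi hIn]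
  -- the potential function
  set g : Bool × ℕ → ℝ≥0∞ :=
    fun s => if s.1 = true ∧ s.2 ≤ M then ENNReal.ofReal (θ ^ (M - s.2)) else 0 with hgdef
  have hg1 : ∀ s, g s ≤ 1 := by
    intro s
    rw [hgdef]
    dsimp only
    split
    · exact ENNReal.ofReal_le_one.mpr (pow_le_one₀ hθ0 hθ1)
    · exact zero_le_one
  have htarT : ((true:Bool), M) ∉ T := by rw [hTmem]; simp
  have hgsupp : ∀ s : Bool × ℕ, s ≠ ((true:Bool), M) → s ∉ T → g s = 0 := by
    rintro ⟨b, I⟩ h1 h2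
    rw [hTmem] at h2
    push_neg at h2
    rw [hgdef]
    dsimp only
    rw [if_neg]
    rintro ⟨hb, hIM⟩
    have hIn : I ≤ n := le_trans hIM hMn.le
    have h3 := h2 hb hIn
    exact h1 (Prod.ext hb h3)
  -- core real inequality
  have hcore : ∀ I : ℕ, I < M →
      θ * (lam * ((n:ℝ) - I) + I + 1) ≤ lam * ((n:ℝ) - I) + I * θ^2 := by
    intro I hIM
    have hIle : (I:ℝ) ≤ 3/10 * (lam * n) := by
      have h1 : (I:ℝ) ≤ M := by exact_mod_cast hIM.le
      linarith
    have hI0 : (0:ℝ) ≤ I := Nat.cast_nonneg I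
    have hA : 7/10 * (lam * n) ≤ lam * ((n:ℝ) - I) := by nlinarith
    have h1 : (7/10 * (lam * n)) * ε ≤ lam * ((n:ℝ) - I) * ε :=
      mul_le_mul_of_nonneg_right hA hε0.le
    have h2 : (I:ℝ) * ε ≤ (3/10 * (lam * n)) * ε :=
      mul_le_mul_of_nonneg_right hIle hε0.le
    rw [hθdef]
    nlinarith [mul_nonneg hI0 (mul_nonneg hε0.le hε0.le), h1, h2, hεL]
  -- submartingale property
  have hsub : ∀ s : Bool × ℕ, g s ≤ ∑' J : Bool × ℕ, Q s J * g J := by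
    rintro ⟨b, I⟩
    by_cases hT : (b, I) ∈ T
    · obtain ⟨hb, hIn, hIM⟩ := (hTmem _).mp hT
      simp only at hb
      subst hb
      by_cases hIlt : I < M
      · -- main transient case
        rw [hQeq I hIn hIM]
        obtain ⟨k, hk⟩ : ∃ k, M = I + (k + 1) := ⟨M - I - 1, by omega⟩
        have hud : ((true:Bool), I+1) ≠ ((true:Bool), I-1) := by
          simp only [ne_eq, Prod.mk.injEq, true_and]
          omega
        refine le_trans ?_ (pair_le_tsum _ ((true:Bool), I+1) ((true:Bool), I-1) hud)
        dsimp only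
        rw [if_pos rfl, if_neg hud.symm, if_pos rfl]
        have hgu : g ((true:Bool), I+1) = ENNReal.ofReal (θ ^ k) := by
          rw [hgdef]
          dsimp only
          rw [if_pos ⟨rfl, by rw [hk]; omega⟩, show M - (I+1) = k by omega]
        have hgd : ENNReal.ofReal (θ ^ (k+2)) ≤ g ((true:Bool), I-1) := by
          rw [hgdef]
          dsimp only
          rw [if_pos ⟨rfl, by rw [hk]; omega⟩]
          exact ENNReal.ofReal_le_ofReal
            (pow_le_pow_of_le_one hθ0 hθ1 (by rw [hk]; omega))
        have hgs : g ((true:Bool), I) = ENNReal.ofReal (θ ^ (k+1)) := by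
          rw [hgdef]
          dsimp only
          rw [if_pos ⟨rfl, by rw [hk]; omega⟩, show M - I = k + 1 by omega]
        rw [hgs, hgu]
        refine le_trans ?_ (add_le_add_right (mul_le_mul_right hgd _) _)
        have hrpos : 0 < lam * ((n:ℝ) - I) + I + 1 := hr0 I hIn
        have hA0 : 0 ≤ lam * ((n:ℝ) - I) := by
          have h1 : (0:ℝ) ≤ (n:ℝ) - I := by
            have : (I:ℝ) ≤ n := by exact_mod_cast hIn
            linarith
          exact mul_nonneg hl0.le h1
        rw [← ENNReal.ofReal_mul (by positivity), ← ENNReal.ofReal_mul (by positivity),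
          ← ENNReal.ofReal_add (by positivity) (by positivity)]
        refine ENNReal.ofReal_le_ofReal ?_
        have hkey := hcore I hIlt
        have hpk : (0:ℝ) ≤ θ ^ k := pow_nonneg hθ0 k
        rw [div_mul_eq_mul_div, div_mul_eq_mul_div, ← add_div,
          le_div_iff₀ hrpos]
        calc θ ^ (k+1) * (lam * ((n:ℝ) - I) + I + 1)
            = θ ^ k * (θ * (lam * ((n:ℝ) - I) + I + 1)) := by ring
        _ ≤ θ ^ k * (lam * ((n:ℝ) - I) + I * θ^2) := mul_le_mul_of_nonneg_left hkey hpk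
        _ = lam * ((n:ℝ) - I) * θ ^ k + (I:ℝ) * θ ^ (k+2) := by ring
      · -- I > M : g vanishes
        have : g ((true:Bool), I) = 0 := by
          rw [hgdef]
          dsimp only
          rw [if_neg (by rintro ⟨-, h⟩; omega)]
        rw [this]
        exact zero_le
    · by_cases htar : (b, I) = ((true:Bool), M)
      · rw [hQabs _ hT]
        have : ∑' J : Bool × ℕ, (if J = (b, I) then (1:ℝ≥0∞) else 0) * g J = g (b, I) := by
          rw [tsum_eq_single (b, I) (fun J hJ => by rw [if_neg hJ, zero_mul])]
          rw [if_pos rfl, one_mul]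
        rw [this]
      · rw [hgsupp _ htar hT]
        exact zero_le
  -- row sums at transient states are at most 1 - delta
  set δ : ℝ≥0∞ := ENNReal.ofReal (1 / (2*(n:ℝ) + 2)) with hδdef
  have hδ0 : δ ≠ 0 := by
    rw [hδdef]
    simp only [ne_eq, ENNReal.ofReal_eq_zero, not_le]
    positivity
  set β : ℝ≥0∞ := 1 - δ with hβdef
  have hβlt : β < 1 := ENNReal.sub_lt_self ENNReal.one_ne_top one_ne_zero hδ0
  have hrowT : ∀ s ∈ T, (∑ J ∈ T, Q s J) ≤ β := by
    rintro ⟨b, I⟩ hs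
    obtain ⟨hb, hIn, hIM⟩ := (hTmem _).mp hs
    simp only at hb
    subst hb
    rw [hQeq I hIn hIM]
    have hrpos : 0 < lam * ((n:ℝ) - I) + I + 1 := hr0 I hIn
    have hA0 : 0 ≤ lam * ((n:ℝ) - I) := by
      have h1 : (0:ℝ) ≤ (n:ℝ) - I := by
        have : (I:ℝ) ≤ n := by exact_mod_cast hIn
        linarith
      exact mul_nonneg hl0.le h1
    set f : Bool × ℕ → ℝ≥0∞ := fun J =>
        if J = ((true:Bool), I+1) then
          ENNReal.ofReal (lam * ((n:ℝ) - I) / (lam * ((n:ℝ) - I) + I + 1))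
        else if J = ((true:Bool), I-1) then
          ENNReal.ofReal ((I:ℝ) / (lam * ((n:ℝ) - I) + I + 1))
        else if J = ((false:Bool), I) then
          ENNReal.ofReal (1 / (lam * ((n:ℝ) - I) + I + 1))
        else 0 with hfdef
    have hftot : ∑' J : Bool × ℕ, f J = 1 := by
      rw [tsum_triple f ((true:Bool), I+1) ((true:Bool), I-1) ((false:Bool), I)
        (by simp only [ne_eq, Prod.mk.injEq, true_and]; omega)
        (by simp) (by simp)
        (fun J h1 h2 h3 => by rw [hfdef]; dsimp only; rw [if_neg h1, if_neg h2, if_neg h3])]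
      rw [hfdef]
      dsimp only
      rw [if_pos rfl, if_neg (by simp only [ne_eq, Prod.mk.injEq, true_and]; omega), if_pos rfl,
        if_neg (by simp), if_neg (by simp), if_pos rfl]
      rw [← ENNReal.ofReal_add (by positivity) (by positivity),
        ← ENNReal.ofReal_add (by positivity) (by positivity)]
      rw [← add_div, ← add_div, div_self hrpos.ne']
      exact ENNReal.ofReal_one
    have hw : ((false:Bool), I) ∉ T := by rw [hTmem]; simp
    have hsum_le : f ((false:Bool), I) + (∑ J ∈ T, f J) ≤ 1 := by
      rw [← Finset.sum_insert hw, ← hftot]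
      exact ENNReal.sum_le_tsum _
    have hδle : δ ≤ f ((false:Bool), I) := by
      rw [hfdef]
      dsimp only
      rw [if_neg (by simp), if_neg (by simp), if_pos rfl, hδdef]
      refine ENNReal.ofReal_le_ofReal ?_
      refine one_div_le_one_div_of_le hrpos ?_
      have h1 : lam * ((n:ℝ) - I) ≤ n := by
        have h2 : (0:ℝ) ≤ (n:ℝ) - I := by
          have : (I:ℝ) ≤ n := by exact_mod_cast hIn
          linarith
        nlinarith
      have h3 : (I:ℝ) ≤ n := by exact_mod_cast hIn
      linarith
    rw [hβdef]
    refine ENNReal.le_sub_of_add_le_right ENNReal.ofReal_ne_top ?_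
    calc (∑ J ∈ T, f J) + δ ≤ (∑ J ∈ T, f J) + f ((false:Bool), I) := add_le_add_right hδle _
    _ = f ((false:Bool), I) + (∑ J ∈ T, f J) := add_comm _ _
    _ ≤ 1 := hsum_le
  -- expectation of g is nondecreasing
  have hF : ∀ t, ENNReal.ofReal (θ ^ K) ≤ ∑' s : Bool × ℕ, μ t s * g s := by
    intro t
    induction t with
    | zero =>
      rw [hμ0]
      have : ∑' s : Bool × ℕ, (if s = ((true:Bool), I0) then (1:ℝ≥0∞) else 0) * g s
          = g ((true:Bool), I0) := by
        rw [tsum_eq_single ((true:Bool), I0) (fun J hJ => by rw [if_neg hJ, zero_mul])]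
        rw [if_pos rfl, one_mul]
      rw [this, hgdef]
      dsimp only
      rw [if_pos ⟨rfl, by omega⟩, show M - I0 = K by omega]
    | succ t ih =>
      refine le_trans ih ?_
      rw [hμs t]
      calc ∑' s : Bool × ℕ, μ t s * g s
          ≤ ∑' s : Bool × ℕ, μ t s * ∑' J : Bool × ℕ, Q s J * g J :=
            ENNReal.tsum_le_tsum (fun s => mul_le_mul_right (hsub s) _)
      _ = ∑' s : Bool × ℕ, ∑' J : Bool × ℕ, μ t s * (Q s J * g J) := by
            congr 1
            funext s
            rw [ENNReal.tsum_mul_left]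
      _ = ∑' J : Bool × ℕ, ∑' s : Bool × ℕ, μ t s * (Q s J * g J) := ENNReal.tsum_comm
      _ = ∑' J : Bool × ℕ, (∑' s : Bool × ℕ, μ t s * Q s J) * g J := by
            congr 1
            funext J
            rw [← ENNReal.tsum_mul_right]
            congr 1
            funext s
            rw [mul_assoc]
  -- splitting the expectation
  have hsplit : ∀ t, (∑' s : Bool × ℕ, μ t s * g s)
      ≤ μ t ((true:Bool), M) + ∑ s ∈ T, μ t s := by
    intro t
    have hb : ∀ s : Bool × ℕ,
        μ t s * g s ≤ (if s ∈ insert ((true:Bool), M) T then μ t s else 0) := by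
      intro s
      by_cases h : s ∈ insert ((true:Bool), M) T
      · rw [if_pos h]
        exact le_trans (mul_le_mul_right (hg1 s) _) (by rw [mul_one])
      · rw [if_neg h]
        rw [hgsupp s (fun hc => h (hc ▸ Finset.mem_insert_self _ _))
          (fun hc => h (Finset.mem_insert_of_mem hc)), mul_zero]
    calc ∑' s : Bool × ℕ, μ t s * g s
        ≤ ∑' s : Bool × ℕ, (if s ∈ insert ((true:Bool), M) T then μ t s else 0) :=
          ENNReal.tsum_le_tsum hb
    _ = ∑ s ∈ insert ((true:Bool), M) T,
          (if s ∈ insert ((true:Bool), M) T then μ t s else 0) :=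
          tsum_eq_sum (fun s hs => if_neg hs)
    _ = ∑ s ∈ insert ((true:Bool), M) T, μ t s :=
          Finset.sum_congr rfl (fun s hs => if_pos hs)
    _ = μ t ((true:Bool), M) + ∑ s ∈ T, μ t s := Finset.sum_insert htarT
  -- geometric decay of the transient mass
  have hD : ∀ t, (∑ s ∈ T, μ t s) ≤ β ^ t := by
    intro t
    induction t with
    | zero =>
      rw [hμ0, pow_zero]
      rw [Finset.sum_ite_eq' T ((true:Bool), I0) (fun _ => (1:ℝ≥0∞))]
      split <;> simp
    | succ t ih =>
      rw [hμs t]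
      calc ∑ J ∈ T, ∑' s : Bool × ℕ, μ t s * Q s J
          = ∑' s : Bool × ℕ, ∑ J ∈ T, μ t s * Q s J :=
            (Summable.tsum_finsetSum (fun _ _ => ENNReal.summable)).symm
      _ = ∑' s : Bool × ℕ, μ t s * ∑ J ∈ T, Q s J := by
            congr 1
            funext s
            rw [Finset.mul_sum]
      _ ≤ ∑' s : Bool × ℕ, (if s ∈ T then μ t s * β else 0) := by
            refine ENNReal.tsum_le_tsum (fun s => ?_)
            by_cases h : s ∈ T
            · rw [if_pos h]
              exact mul_le_mul_right (hrowT s h) _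
            · rw [if_neg h, hQabs s h]
              have : ∑ J ∈ T, (if J = s then (1:ℝ≥0∞) else 0) = 0 := by
                rw [Finset.sum_ite_eq' T s (fun _ => (1:ℝ≥0∞)), if_neg h]
              rw [this, mul_zero]
      _ = ∑ s ∈ T, (if s ∈ T then μ t s * β else 0) := tsum_eq_sum (fun s hs => if_neg hs)
      _ = ∑ s ∈ T, μ t s * β := Finset.sum_congr rfl (fun s hs => if_pos hs)
      _ = (∑ s ∈ T, μ t s) * β := (Finset.sum_mul _ _ _).symm
      _ ≤ β ^ t * β := mul_le_mul_left ih β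
      _ = β ^ (t+1) := (pow_succ β t).symm
  -- the hitting probability dominates each μ t at the target
  have htar_le : ∀ t, μ t ((true:Bool), M) ≤
      hitProb (absorbStep {s : Bool × ℕ | s.1 = false} st) ((true:Bool), I0)
        {((true:Bool), M)} := by
    intro t
    have hind : ∑' s : Bool × ℕ,
        Set.indicator {((true:Bool), M)} (μ t) s = μ t ((true:Bool), M) := by
      rw [tsum_eq_single ((true:Bool), M)
        (fun s hs => Set.indicator_of_notMem (by simpa using hs) _)]
      exact Set.indicator_of_mem rfl _
    rw [hitProb]
    exact hind ▸ le_iSup (fun t' => ∑' s : Bool × ℕ,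
      Set.indicator {((true:Bool), M)} (markovDist Q ((true:Bool), I0) t') s) t
  -- conclusion
  refine ENNReal.le_of_forall_pos_le_add (fun η hη _ => ?_)
  have h0η : (0:ℝ≥0∞) < η := by exact_mod_cast hη
  obtain ⟨t, ht⟩ :=
    ((ENNReal.tendsto_pow_atTop_nhds_zero_of_lt_one hβlt).eventually_lt_const h0η).exists
  calc ENNReal.ofReal ((1 - 14 / (lam * n)) ^ K)
      ≤ μ t ((true:Bool), M) + ∑ s ∈ T, μ t s := le_trans (hF t) (hsplit t)
  _ ≤ hitProb (absorbStep {s : Bool × ℕ | s.1 = false} st) ((true:Bool), I0)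
        {((true:Bool), M)} + β ^ t := add_le_add (htar_le t) (hD t)
  _ ≤ hitProb (absorbStep {s : Bool × ℕ | s.1 = false} st) ((true:Bool), I0)
        {((true:Bool), M)} + η := add_le_add_right ht.le _

/-- With the center infected and at most λn/4 − λn/(4z) infected leaves,
the probability of gaining ⌈λn/(4z)⌉ infected leaves before the center heals is at
least exp(−C/z). -/
theorem star_gain_probability (alpha : ℝ) (ha : -1 < alpha) (lam z : ℕ → ℝ)
    (hlam : ∀ n, 0 < lam n ∧ lam n < 1) (hz : ∀ n, 0 < z n)
    (hln : Tendsto (fun n : ℕ => lam n * n) atTop atTop)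
    (hzo : (fun n : ℕ => z n) =o[atTop] (fun n : ℕ => lam n * n))
    (I0 : ℕ → ℕ)
    (hI0 : ∀ n, (I0 n : ℝ) ≤ lam n * n / 4 - lam n * n / (4 * z n)) :
    ∃ C : ℝ, 0 < C ∧ ∀ᶠ n : ℕ in atTop,
      ENNReal.ofReal (Real.exp (-C / z n)) ≤
        hitProb (absorbStep {s : Bool × ℕ | s.1 = false} (starStep n (lam n) alpha))
          ((true : Bool), I0 n)
          {((true : Bool), I0 n + ⌈lam n * n / (4 * z n)⌉₊)} := by
  refine ⟨28, by norm_num, ?_⟩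
  have hev1 : ∀ᶠ n : ℕ in atTop, 28 ≤ lam n * n := hln.eventually_ge_atTop 28
  have hev2 : ∀ᶠ n : ℕ in atTop, ‖z n‖ ≤ (1/2) * ‖lam n * n‖ :=
    hzo.def (by norm_num)
  filter_upwards [hev1, hev2] with n h28 hzb
  obtain ⟨hl0, hl1⟩ := hlam n
  have hzn := hz n
  have hLpos : (0:ℝ) < lam n * n := by linarith
  have hzL : z n ≤ (lam n * n) / 2 := by
    rw [Real.norm_eq_abs, Real.norm_eq_abs, abs_of_pos hzn, abs_of_pos hLpos] at hzb
    linarith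
  set K : ℕ := ⌈lam n * n / (4 * z n)⌉₊ with hKdef
  have hx4 : (0:ℝ) ≤ lam n * n / (4 * z n) := by positivity
  have hKub : (K:ℝ) ≤ lam n * n / (4 * z n) + 1 := (Nat.ceil_lt_add_one hx4).le
  have hM : ((I0 n + K : ℕ):ℝ) ≤ 3/10 * (lam n * n) := by
    push_cast
    have hI := hI0 n
    linarith
  refine le_trans ?_ (star_master n (lam n) alpha hl0 hl1 h28 (I0 n) K hM)
  refine ENNReal.ofReal_le_ofReal ?_
  have hKz : (K:ℝ) * z n ≤ lam n * n := by
    have h1 : (K:ℝ) * z n ≤ (lam n * n / (4 * z n) + 1) * z n :=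
      mul_le_mul_of_nonneg_right hKub hzn.le
    have h2 : (lam n * n / (4 * z n) + 1) * z n = lam n * n / 4 + z n := by
      field_simp
    nlinarith
  have hx0 : (0:ℝ) ≤ 14 / (lam n * n) := by positivity
  have hxh : 14 / (lam n * n) ≤ 1/2 := by
    rw [div_le_iff₀ hLpos]
    linarith
  have hexp : Real.exp (-(2 * (14 / (lam n * n)))) ≤ 1 - 14 / (lam n * n) := by
    have h1 : 2 * (14 / (lam n * n)) + 1 ≤ Real.exp (2 * (14 / (lam n * n))) :=
      Real.add_one_le_exp _
    rw [Real.exp_neg, inv_eq_one_div, div_le_iff₀ (Real.exp_pos _)]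
    nlinarith [h1]
  have h2xK : 2 * (14 / (lam n * n)) * (K:ℝ) ≤ 28 / z n := by
    have h3 : 2 * (14 / (lam n * n)) * (K:ℝ) = 28 * K / (lam n * n) := by ring
    rw [h3, div_le_div_iff₀ hLpos hzn]
    nlinarith
  calc Real.exp (-28 / z n) ≤ Real.exp ((K:ℝ) * (-(2 * (14 / (lam n * n))))) := by
        apply Real.exp_le_exp.mpr
        have : (K:ℝ) * (-(2 * (14 / (lam n * n)))) = -(2 * (14 / (lam n * n)) * K) := by ring
        rw [this, neg_div]
        linarith
  _ = (Real.exp (-(2 * (14 / (lam n * n))))) ^ K := Real.exp_nat_mul _ K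
  _ ≤ (1 - 14 / (lam n * n)) ^ K :=
      pow_le_pow_left₀ (Real.exp_pos _).le hexp K
end

section
/- Let α > −1 be fixed and let λ : ℕ → (0,1) satisfy λ(n)·(λ(n)·n)^α ≤ 1 for all n and β_n → ∞, where β_n = λ(n)^{2+α}·n^{1+α}. For each n, let T_n be the survival time of the star infection chain with n leaves started at a state (1, I₀(n)) with I₀(n) ≥ λ(n)n/4 (center infected and at least λ(n)n/4 infected leaves). Then there exists a constant c > 0 such that Pr[T_n ≥ 2^{c·√β_n}] → 1 as n → ∞. -/
open scoped ENNReal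
open Filter Asymptotics

section general
variable {S : Type*} [DecidableEq S]

lemma markov_mass_le (step : S → S → ℝ≥0∞) (hrow : ∀ s, ∑' J, step s J ≤ 1) (s0 : S) :
    ∀ t, ∑' s, markovDist step s0 t s ≤ 1 := by
  intro t
  induction t with
  | zero => simp [markovDist]
  | succ t ih =>
    calc ∑' J, markovDist step s0 (t+1) J
        = ∑' J, ∑' s, markovDist step s0 t s * step s J := rfl
      _ = ∑' s, ∑' J, markovDist step s0 t s * step s J := ENNReal.tsum_comm
      _ = ∑' s, markovDist step s0 t s * ∑' J, step s J := by
          simp [ENNReal.tsum_mul_left]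
      _ ≤ ∑' s, markovDist step s0 t s * 1 :=
          Summable.tsum_le_tsum (fun s => mul_le_mul_right (hrow s) _) ENNReal.summable ENNReal.summable
      _ = ∑' s, markovDist step s0 t s := by simp
      _ ≤ 1 := ih

lemma markov_exp_le (step : S → S → ℝ≥0∞) (hrow : ∀ s, ∑' J, step s J ≤ 1)
    (g : S → ℝ≥0∞) (ε : ℝ≥0∞)
    (hdrift : ∀ s, ∑' J, step s J * g J ≤ g s + ε) (s0 : S) :
    ∀ t, ∑' s, markovDist step s0 t s * g s ≤ g s0 + t * ε := by
  intro t
  induction t with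
  | zero =>
    have h : (fun s => markovDist step s0 0 s * g s) = fun s => if s = s0 then g s0 else 0 := by
      funext s; by_cases h : s = s0 <;> simp [markovDist, h]
    rw [h, tsum_ite_eq]; simp
  | succ t ih =>
    calc ∑' J, markovDist step s0 (t+1) J * g J
        = ∑' J, ∑' s, markovDist step s0 t s * step s J * g J := by
          simp only [markovDist, ENNReal.tsum_mul_right]
      _ = ∑' s, ∑' J, markovDist step s0 t s * (step s J * g J) := by
          rw [ENNReal.tsum_comm]; simp only [mul_assoc]
      _ = ∑' s, markovDist step s0 t s * ∑' J, step s J * g J := by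
          simp [ENNReal.tsum_mul_left]
      _ ≤ ∑' s, markovDist step s0 t s * (g s + ε) :=
          Summable.tsum_le_tsum (fun s => mul_le_mul_right (hdrift s) _) ENNReal.summable ENNReal.summable
      _ = ∑' s, (markovDist step s0 t s * g s + markovDist step s0 t s * ε) := by
          simp [mul_add]
      _ = (∑' s, markovDist step s0 t s * g s) + (∑' s, markovDist step s0 t s) * ε := by
          rw [ENNReal.tsum_add, ENNReal.tsum_mul_right]
      _ ≤ (g s0 + t * ε) + 1 * ε :=
          add_le_add ih (mul_le_mul_left (markov_mass_le step hrow s0 t) ε)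
      _ = g s0 + (↑(t+1)) * ε := by push_cast; ring

lemma markov_point_le (step : S → S → ℝ≥0∞) (hrow : ∀ s, ∑' J, step s J ≤ 1)
    (g : S → ℝ≥0∞) (ε : ℝ≥0∞)
    (hdrift : ∀ s, ∑' J, step s J * g J ≤ g s + ε) (s0 a : S) (hga : 1 ≤ g a) (t : ℕ) :
    markovDist step s0 t a ≤ g s0 + t * ε := by
  calc markovDist step s0 t a ≤ markovDist step s0 t a * g a := le_mul_of_one_le_right' hga
    _ ≤ ∑' s, markovDist step s0 t s * g s := ENNReal.le_tsum a
    _ ≤ g s0 + t * ε := markov_exp_le step hrow g ε hdrift s0 t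

lemma tsum_eq_three (f : S → ℝ≥0∞) (a b c : S) (hab : a ≠ b) (hac : a ≠ c) (hbc : b ≠ c)
    (h0 : ∀ J, J ≠ a → J ≠ b → J ≠ c → f J = 0) :
    ∑' J, f J = f a + f b + f c := by
  classical
  rw [tsum_eq_sum (s := ({a, b, c} : Finset S)) (by
    intro J hJ
    simp only [Finset.mem_insert, Finset.mem_singleton] at hJ
    push_neg at hJ
    exact h0 J hJ.1 hJ.2.1 hJ.2.2)]
  rw [Finset.sum_insert (by simp [hab, hac]), Finset.sum_insert (by simp [hbc]),
    Finset.sum_singleton, add_assoc]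

lemma tsum_eq_two (f : S → ℝ≥0∞) (a b : S) (hab : a ≠ b)
    (h0 : ∀ J, J ≠ a → J ≠ b → f J = 0) :
    ∑' J, f J = f a + f b := by
  classical
  rw [tsum_eq_sum (s := ({a, b} : Finset S)) (by
    intro J hJ
    simp only [Finset.mem_insert, Finset.mem_singleton] at hJ
    push_neg at hJ
    exact h0 J hJ.1 hJ.2)]
  rw [Finset.sum_insert (by simp [hab]), Finset.sum_singleton]

end general



noncomputable def Fpot (Ilow Istar : ℕ) (ρ : ℝ) : ℕ → ℝ :=
  fun I => max (ρ ^ (Istar - Ilow)) (ρ ^ (I - Ilow))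

noncomputable def Gpot (Ilow Istar : ℕ) (ρ : ℝ) : Bool × ℕ → ℝ
  | (true, I) => Fpot Ilow Istar ρ I
  | (false, I) => min 1 (2 * Fpot Ilow Istar ρ I)

section pot
variable {Ilow Istar : ℕ} {ρ : ℝ}

lemma Fpot_pos (hρ0 : 0 < ρ) (I : ℕ) : 0 < Fpot Ilow Istar ρ I :=
  lt_max_of_lt_left (pow_pos hρ0 _)

lemma Fpot_le_one (hρ0 : 0 < ρ) (hρ1 : ρ ≤ 1) (I : ℕ) : Fpot Ilow Istar ρ I ≤ 1 :=
  max_le (pow_le_one₀ hρ0.le hρ1) (pow_le_one₀ hρ0.le hρ1)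

lemma Fpot_low (hρ0 : 0 < ρ) (hρ1 : ρ ≤ 1) {I : ℕ} (h : I ≤ Ilow) :
    Fpot Ilow Istar ρ I = 1 := by
  rw [Fpot, Nat.sub_eq_zero_of_le h, pow_zero]
  exact max_eq_right (pow_le_one₀ hρ0.le hρ1)

lemma Fpot_m_le (I : ℕ) : ρ ^ (Istar - Ilow) ≤ Fpot Ilow Istar ρ I := le_max_left _ _

lemma Fpot_flat (hρ0 : 0 < ρ) (hρ1 : ρ ≤ 1) {I : ℕ} (h : Istar ≤ I) :
    Fpot Ilow Istar ρ I = ρ ^ (Istar - Ilow) :=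
  max_eq_left (pow_le_pow_of_le_one hρ0.le hρ1 (Nat.sub_le_sub_right h _))

lemma Fpot_succ_le (hρ0 : 0 < ρ) (hρ1 : ρ ≤ 1) (I : ℕ) :
    Fpot Ilow Istar ρ (I + 1) ≤ Fpot Ilow Istar ρ I :=
  max_le (le_max_left _ _)
    (le_max_of_le_right (pow_le_pow_of_le_one hρ0.le hρ1 (Nat.sub_le_sub_right (Nat.le_succ I) _)))

lemma Fpot_mul_le_succ (hρ0 : 0 < ρ) (hρ1 : ρ ≤ 1) (I : ℕ) :
    ρ * Fpot Ilow Istar ρ I ≤ Fpot Ilow Istar ρ (I + 1) := by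
  rw [Fpot, mul_max_of_nonneg _ _ hρ0.le]
  apply max_le
  · calc ρ * ρ ^ (Istar - Ilow) ≤ 1 * ρ ^ (Istar - Ilow) :=
          mul_le_mul_of_nonneg_right hρ1 (pow_nonneg hρ0.le _)
    _ = ρ ^ (Istar - Ilow) := one_mul _
    _ ≤ Fpot Ilow Istar ρ (I + 1) := Fpot_m_le _
  · calc ρ * ρ ^ (I - Ilow) = ρ ^ (I - Ilow + 1) := (pow_succ' ρ _).symm
    _ ≤ ρ ^ (I + 1 - Ilow) := pow_le_pow_of_le_one hρ0.le hρ1 (by omega)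
    _ ≤ Fpot Ilow Istar ρ (I + 1) := le_max_right _ _

lemma Fpot_geom (hρ0 : 0 < ρ) (hρ1 : ρ ≤ 1) {I : ℕ} (h1 : Ilow ≤ I) (h2 : I < Istar) :
    Fpot Ilow Istar ρ (I + 1) ≤ ρ * Fpot Ilow Istar ρ I := by
  have hFI : Fpot Ilow Istar ρ I = ρ ^ (I - Ilow) :=
    max_eq_right (pow_le_pow_of_le_one hρ0.le hρ1 (by omega))
  rw [hFI]
  apply max_le
  · calc ρ ^ (Istar - Ilow) ≤ ρ ^ (I + 1 - Ilow) :=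
          pow_le_pow_of_le_one hρ0.le hρ1 (by omega)
    _ = ρ * ρ ^ (I - Ilow) := by
          rw [show I + 1 - Ilow = I - Ilow + 1 by omega, pow_succ']
  · rw [show I + 1 - Ilow = I - Ilow + 1 by omega, pow_succ']

lemma Fpot_pred_le (hρ0 : 0 < ρ) (hρ1 : ρ ≤ 1) (I : ℕ) :
    ρ * Fpot Ilow Istar ρ (I - 1) ≤ Fpot Ilow Istar ρ I := by
  cases I with
  | zero =>
    simp only [Nat.zero_sub]
    calc ρ * Fpot Ilow Istar ρ 0 ≤ 1 * Fpot Ilow Istar ρ 0 :=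
          mul_le_mul_of_nonneg_right hρ1 (Fpot_pos hρ0 0).le
    _ = Fpot Ilow Istar ρ 0 := one_mul _
  | succ I => simpa using Fpot_mul_le_succ hρ0 hρ1 I

lemma Gpot_nonneg (hρ0 : 0 < ρ) (s : Bool × ℕ) : 0 ≤ Gpot Ilow Istar ρ s := by
  rcases s with ⟨b, I⟩
  cases b
  · exact le_min one_pos.le (by nlinarith [Fpot_pos (Ilow := Ilow) (Istar := Istar) hρ0 I])
  · exact (Fpot_pos hρ0 I).le

lemma Gpot_le_one (hρ0 : 0 < ρ) (hρ1 : ρ ≤ 1) (s : Bool × ℕ) : Gpot Ilow Istar ρ s ≤ 1 := by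
  rcases s with ⟨b, I⟩
  cases b
  · exact min_le_left _ _
  · exact Fpot_le_one hρ0 hρ1 I

end pot

section general2
variable {S : Type*} [DecidableEq S]

lemma tsum_pointmass (g : S → ℝ≥0∞) (s : S) :
    ∑' J, (if J = s then (1:ℝ≥0∞) else 0) * g J = g s := by
  have h : (fun J => (if J = s then (1:ℝ≥0∞) else 0) * g J)
      = fun J => if J = s then g s else 0 := by
    funext J; by_cases hJ : J = s <;> simp [hJ]
  rw [h, tsum_ite_eq]

end general2

lemma star_row_le (n : ℕ) (lam alpha : ℝ) (hlam0 : 0 < lam) (s : Bool × ℕ) :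
    ∑' J, starStep n lam alpha s J ≤ 1 := by
  rcases s with ⟨b, I⟩
  cases b with
  | false =>
    by_cases h : I = 0 ∨ n < I
    · simp only [starStep, if_pos h]
      rw [tsum_ite_eq]
    · have hI0 : I ≠ 0 := fun e => h (Or.inl e)
      have hIpos : (0:ℝ) < I := by exact_mod_cast Nat.pos_of_ne_zero hI0
      have hr : (0:ℝ) < lam * (I:ℝ) ^ (1 + alpha) :=
        mul_pos hlam0 (Real.rpow_pos_of_pos hIpos _)
      have hq : (0:ℝ) < (I : ℝ) + lam * (I:ℝ) ^ (1 + alpha) := by linarith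
      rw [tsum_eq_two _ ((false : Bool), I-1) ((true : Bool), I) (by simp)
        (by
          intro J h1 h2
          simp only [starStep, if_neg h]
          rw [if_neg h1, if_neg h2])]
      simp only [starStep, if_neg h]
      norm_num
      rw [← ENNReal.ofReal_add (by positivity) (by positivity), ← add_div,
        div_self hq.ne']
      simp
  | true =>
    by_cases h : n < I
    · simp only [starStep, if_pos h]
      rw [tsum_ite_eq]
    · have hIn : I ≤ n := le_of_not_gt h
      have hnI : (0:ℝ) ≤ lam * ((n:ℝ) - I) := by
        have h' : (I:ℝ) ≤ n := by exact_mod_cast hIn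
        exact mul_nonneg hlam0.le (by linarith)
      have hr : (0:ℝ) < lam * ((n:ℝ) - I) + I + 1 := by positivity
      rw [tsum_eq_three _ ((true : Bool), I+1) ((true : Bool), I-1) ((false : Bool), I)
        (by simp; omega) (by simp) (by simp)
        (by
          intro J h1 h2 h3
          simp only [starStep, if_neg h]
          rw [if_neg h1, if_neg h2, if_neg h3])]
      have hne : ¬((true : Bool), I - 1) = ((true : Bool), I + 1) := by simp only [Prod.mk.injEq, true_and]; omega
      simp only [starStep, if_neg h]
      rw [if_pos trivial, if_neg hne, if_pos trivial,
        if_neg (show ¬((false : Bool), I) = ((true : Bool), I + 1) by simp),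
        if_neg (show ¬((false : Bool), I) = ((true : Bool), I - 1) by simp),
        if_pos trivial]
      rw [← ENNReal.ofReal_add (by positivity) (by positivity),
        ← ENNReal.ofReal_add (by positivity) (by positivity),
        ← add_div, ← add_div, div_self hr.ne']
      simp

lemma Gpot_false (Ilow Istar : ℕ) (ρ : ℝ) (I : ℕ) :
    Gpot Ilow Istar ρ (false, I) = min 1 (2 * Fpot Ilow Istar ρ I) := rfl
lemma Gpot_true (Ilow Istar : ℕ) (ρ : ℝ) (I : ℕ) :
    Gpot Ilow Istar ρ (true, I) = Fpot Ilow Istar ρ I := rfl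

lemma star_drift_triv (n Ilow Istar : ℕ) (lam alpha ρ : ℝ) (hlam0 : 0 < lam)
    (hρ0 : 0 < ρ) (hρ1 : ρ ≤ 1) (s : Bool × ℕ) (hG : Gpot Ilow Istar ρ s = 1) (ε : ℝ≥0∞) :
    ∑' J, starStep n lam alpha s J * ENNReal.ofReal (Gpot Ilow Istar ρ J) ≤
      ENNReal.ofReal (Gpot Ilow Istar ρ s) + ε := by
  calc ∑' J, starStep n lam alpha s J * ENNReal.ofReal (Gpot Ilow Istar ρ J)
      ≤ ∑' J, starStep n lam alpha s J * 1 :=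
        Summable.tsum_le_tsum
          (fun J => mul_le_mul_right (ENNReal.ofReal_le_one.mpr (Gpot_le_one hρ0 hρ1 J)) _)
          ENNReal.summable ENNReal.summable
    _ = ∑' J, starStep n lam alpha s J := by simp
    _ ≤ 1 := star_row_le n lam alpha hlam0 s
    _ = ENNReal.ofReal (Gpot Ilow Istar ρ s) := by rw [hG, ENNReal.ofReal_one]
    _ ≤ _ := le_self_add

lemma real_false_case (Iv lamIa FI FI' Gf' m ρ : ℝ)
    (hρ0 : 0 < ρ) (hIv : 0 ≤ Iv) (hFI : 0 < FI) (hFI' : 0 ≤ FI') (hlamIa : 0 ≤ lamIa) (hm : 0 ≤ m)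
    (hGf' : Gf' ≤ 2 * FI') (hpred : ρ * FI' ≤ FI) (hH1 : 2*(1-ρ) ≤ ρ * lamIa) :
    Iv * Gf' + (Iv * lamIa) * FI ≤ (2 * FI + 3 * m) * (Iv + Iv * lamIa) := by
  have key : ρ * (Iv * Gf' + (Iv * lamIa) * FI) ≤ ρ * ((2 * FI + 3 * m) * (Iv + Iv * lamIa)) := by
    have p1 : (ρ * Iv) * Gf' ≤ (ρ * Iv) * (2 * FI') :=
      mul_le_mul_of_nonneg_left hGf' (by positivity)
    have p2 : (2 * Iv) * (ρ * FI') ≤ (2 * Iv) * FI :=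
      mul_le_mul_of_nonneg_left hpred (by positivity)
    have p3 : (2*(1-ρ)) * (Iv * FI) ≤ (ρ * lamIa) * (Iv * FI) :=
      mul_le_mul_of_nonneg_right hH1 (by positivity)
    linarith [p1, p2, p3, mul_nonneg (mul_nonneg hρ0.le hm) (mul_nonneg hIv hlamIa),
      mul_nonneg (mul_nonneg hρ0.le hm) hIv]
  exact le_of_mul_le_mul_left key hρ0

lemma real_false_flat (Iv L Gf' m : ℝ) (hIv : 0 ≤ Iv) (hL : 0 ≤ L) (hm : 0 ≤ m)
    (hGf' : Gf' ≤ 2 * m) : Iv * Gf' + L * m ≤ (2 * m + 3 * m) * (Iv + L) := by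
  linarith [mul_le_mul_of_nonneg_left hGf' hIv, mul_nonneg hL hm, mul_nonneg hIv hm]

lemma real_true_int (lnI Iv FI FI1 FI' Gf m ρ : ℝ)
    (hρ0 : 0 < ρ) (hlnI : 0 ≤ lnI) (hIv : 0 ≤ Iv) (hFI : 0 < FI) (hFI' : 0 ≤ FI')
    (hGf : Gf ≤ 2 * FI) (hm : 0 ≤ m)
    (hF1 : FI1 ≤ ρ * FI) (hpred : ρ * FI' ≤ FI)
    (hH2 : ρ + Iv * (1-ρ) ≤ ρ * lnI * (1-ρ)) :
    lnI * FI1 + Iv * FI' + 1 * Gf ≤ (FI + 3 * m) * (lnI + Iv + 1) := by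
  have key : ρ * (lnI * FI1 + Iv * FI' + 1 * Gf) ≤ ρ * ((FI + 3*m) * (lnI + Iv + 1)) := by
    have p1 : (ρ * lnI) * FI1 ≤ (ρ * lnI) * (ρ * FI) :=
      mul_le_mul_of_nonneg_left hF1 (by positivity)
    have p2 : Iv * (ρ * FI') ≤ Iv * FI := mul_le_mul_of_nonneg_left hpred hIv
    have p3 : ρ * Gf ≤ ρ * (2 * FI) := mul_le_mul_of_nonneg_left hGf hρ0.le
    have p4 : FI * (ρ + Iv * (1-ρ)) ≤ FI * (ρ * lnI * (1-ρ)) :=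
      mul_le_mul_of_nonneg_left hH2 hFI.le
    linarith [p1, p2, p3, p4,
      mul_nonneg (mul_nonneg hρ0.le hm) (by positivity : (0:ℝ) ≤ lnI + Iv + 1)]
  exact le_of_mul_le_mul_left key hρ0

lemma real_true_flat (lnI Iv FI' Gf m ρ : ℝ)
    (hρ0 : 0 < ρ) (hρh : 1/2 ≤ ρ) (hlnI : 0 ≤ lnI) (hIv : 0 ≤ Iv) (hm : 0 < m)
    (hFI' : 0 ≤ FI') (hpred : ρ * FI' ≤ m) (hGf : Gf ≤ 2 * m) :
    lnI * m + Iv * FI' + 1 * Gf ≤ (m + 3 * m) * (lnI + Iv + 1) := by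
  have key : ρ * (lnI * m + Iv * FI' + 1 * Gf) ≤ ρ * ((m + 3*m) * (lnI + Iv + 1)) := by
    have p2 : Iv * (ρ * FI') ≤ Iv * m := mul_le_mul_of_nonneg_left hpred hIv
    have p3 : ρ * Gf ≤ ρ * (2 * m) := mul_le_mul_of_nonneg_left hGf hρ0.le
    have n1 : (0:ℝ) ≤ ρ * m * lnI := mul_nonneg (mul_nonneg hρ0.le hm.le) hlnI
    have n2 : (1/2) * (Iv * m) ≤ ρ * (Iv * m) :=
      mul_le_mul_of_nonneg_right hρh (mul_nonneg hIv hm.le)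
    have n3 : (0:ℝ) ≤ Iv * m := mul_nonneg hIv hm.le
    have n4 : (0:ℝ) ≤ ρ * m := mul_nonneg hρ0.le hm.le
    linarith [p2, p3, n1, n2, n3, n4]
  exact le_of_mul_le_mul_left key hρ0

lemma star_drift (n Ilow Istar : ℕ) (lam alpha ρ : ℝ)
    (hlam0 : 0 < lam) (hρ0 : 0 < ρ) (hρ1 : ρ ≤ 1) (hρh : 1/2 ≤ ρ) (hII : Ilow ≤ Istar)
    (H1 : ∀ I : ℕ, Ilow < I → I ≤ Istar → 2*(1-ρ) ≤ ρ * (lam * (I:ℝ) ^ alpha))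
    (H2 : ∀ I : ℕ, Ilow < I → I < Istar → I ≤ n →
        ρ + (I:ℝ) * (1-ρ) ≤ ρ * (lam * ((n:ℝ) - (I:ℝ))) * (1-ρ))
    (s : Bool × ℕ) :
    ∑' J, starStep n lam alpha s J * ENNReal.ofReal (Gpot Ilow Istar ρ J) ≤
      ENNReal.ofReal (Gpot Ilow Istar ρ s) + ENNReal.ofReal (3 * ρ ^ (Istar - Ilow)) := by
  have hm0 : (0:ℝ) < ρ ^ (Istar - Ilow) := pow_pos hρ0 _
  rcases s with ⟨b, I⟩
  cases b with
  | false =>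
    by_cases h : I = 0 ∨ n < I
    · simp only [starStep, if_pos h]
      rw [tsum_pointmass]
      exact le_self_add
    · have hI0 : I ≠ 0 := fun e => h (Or.inl e)
      have hIpos : (0:ℝ) < I := by exact_mod_cast Nat.pos_of_ne_zero hI0
      by_cases hcap : (1:ℝ) ≤ 2 * Fpot Ilow Istar ρ I
      · exact star_drift_triv n Ilow Istar lam alpha ρ hlam0 hρ0 hρ1 _
          (by rw [Gpot_false]; exact min_eq_left hcap) _
      · push_neg at hcap
        have hlow : Ilow < I := by
          by_contra hc
          push_neg at hc
          rw [Fpot_low hρ0 hρ1 hc] at hcap; linarith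
        have hrp : (0:ℝ) < lam * (I:ℝ) ^ (1+alpha) :=
          mul_pos hlam0 (Real.rpow_pos_of_pos hIpos _)
        have hq : (0:ℝ) < (I:ℝ) + lam * (I:ℝ) ^ (1+alpha) := by linarith
        have hG' : 0 ≤ Gpot Ilow Istar ρ (false, I-1) := Gpot_nonneg hρ0 _
        have hFI : 0 < Fpot Ilow Istar ρ I := Fpot_pos hρ0 I
        rw [tsum_eq_two _ ((false:Bool), I-1) ((true:Bool), I) (by simp)
          (by intro J h1 h2; simp only [starStep, if_neg h]; rw [if_neg h1, if_neg h2, zero_mul])]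
        simp only [starStep, if_neg h]
        rw [if_pos trivial, if_neg (show ¬((true:Bool), I) = ((false:Bool), I-1) by simp),
          if_pos trivial]
        rw [Gpot_false, Gpot_true, Gpot_false]
        rw [← ENNReal.ofReal_mul (by positivity), ← ENNReal.ofReal_mul (by positivity),
          ← ENNReal.ofReal_add (by positivity) (by positivity),
          ← ENNReal.ofReal_add (by positivity) (by positivity)]
        apply ENNReal.ofReal_le_ofReal
        rw [min_eq_right hcap.le]
        rw [div_mul_eq_mul_div, div_mul_eq_mul_div, ← add_div, div_le_iff₀ hq]
        rcases le_or_gt I Istar with hsplit | hsplit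
        · have hIa : (I:ℝ) ^ (1+alpha) = (I:ℝ) * (I:ℝ) ^ alpha := by
            rw [Real.rpow_add hIpos, Real.rpow_one]
          have hmain := real_false_case (I:ℝ) (lam * (I:ℝ)^alpha) (Fpot Ilow Istar ρ I)
            (Fpot Ilow Istar ρ (I-1)) (min 1 (2 * Fpot Ilow Istar ρ (I-1)))
            (ρ ^ (Istar - Ilow)) ρ hρ0 (Nat.cast_nonneg I) hFI (Fpot_pos hρ0 _).le
            (by positivity) hm0.le (min_le_right _ _) (Fpot_pred_le hρ0 hρ1 I)
            (H1 I hlow hsplit)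
          rw [hIa]
          linarith [hmain]
        · -- flat region for false states
          have hflat : Fpot Ilow Istar ρ I = ρ ^ (Istar - Ilow) := Fpot_flat hρ0 hρ1 hsplit.le
          have hflat' : Fpot Ilow Istar ρ (I-1) = ρ ^ (Istar - Ilow) :=
            Fpot_flat hρ0 hρ1 (by omega)
          have hmain := real_false_flat (I:ℝ) (lam * (I:ℝ)^(1+alpha))
            (min 1 (2 * Fpot Ilow Istar ρ (I-1))) (ρ ^ (Istar - Ilow))
            (Nat.cast_nonneg I) hrp.le hm0.le (by rw [hflat']; exact min_le_right _ _)
          rw [hflat]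
          linarith [hmain]
  | true =>
    by_cases h : n < I
    · simp only [starStep, if_pos h]
      rw [tsum_pointmass]
      exact le_self_add
    · have hIn : I ≤ n := le_of_not_gt h
      by_cases hcap : Fpot Ilow Istar ρ I = 1
      · exact star_drift_triv n Ilow Istar lam alpha ρ hlam0 hρ0 hρ1 _
          (by rw [Gpot_true]; exact hcap) _
      · have hlow : Ilow < I := by
          by_contra hc
          push_neg at hc
          exact hcap (Fpot_low hρ0 hρ1 hc)
        have hInr : (I:ℝ) ≤ (n:ℝ) := by exact_mod_cast hIn
        have hnI : (0:ℝ) ≤ lam * ((n:ℝ) - I) := mul_nonneg hlam0.le (by linarith)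
        have hr : (0:ℝ) < lam * ((n:ℝ) - I) + I + 1 := by positivity
        have hFI : 0 < Fpot Ilow Istar ρ I := Fpot_pos hρ0 I
        have hne : ¬((true : Bool), I - 1) = ((true : Bool), I + 1) := by
          simp only [Prod.mk.injEq, true_and]; omega
        rw [tsum_eq_three _ ((true:Bool), I+1) ((true:Bool), I-1) ((false:Bool), I)
          (by simp only [ne_eq, Prod.mk.injEq, true_and]; omega) (by simp) (by simp)
          (by intro J h1 h2 h3; simp only [starStep, if_neg h]
              rw [if_neg h1, if_neg h2, if_neg h3, zero_mul])]
        simp only [starStep, if_neg h]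
        rw [if_pos trivial, if_neg hne, if_pos trivial,
          if_neg (show ¬((false:Bool), I) = ((true:Bool), I+1) by simp),
          if_neg (show ¬((false:Bool), I) = ((true:Bool), I-1) by simp),
          if_pos trivial]
        rw [Gpot_true, Gpot_true, Gpot_false, Gpot_true]
        have hFnn : ∀ K, (0:ℝ) ≤ Fpot Ilow Istar ρ K := fun K => (Fpot_pos hρ0 K).le
        have hGf0 : (0:ℝ) ≤ min 1 (2 * Fpot Ilow Istar ρ I) :=
          le_min one_pos.le (by nlinarith [hFnn I])
        have hp1 : (0:ℝ) ≤ lam * ((n:ℝ) - I) / (lam * ((n:ℝ) - I) + I + 1) :=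
          div_nonneg hnI hr.le
        have hp2 : (0:ℝ) ≤ (I:ℝ) / (lam * ((n:ℝ) - I) + I + 1) :=
          div_nonneg (Nat.cast_nonneg I) hr.le
        have hp3 : (0:ℝ) ≤ 1 / (lam * ((n:ℝ) - I) + I + 1) := by positivity
        rw [← ENNReal.ofReal_mul hp1, ← ENNReal.ofReal_mul hp2,
          ← ENNReal.ofReal_mul hp3,
          ← ENNReal.ofReal_add (mul_nonneg hp1 (hFnn _)) (mul_nonneg hp2 (hFnn _)),
          ← ENNReal.ofReal_add (add_nonneg (mul_nonneg hp1 (hFnn _)) (mul_nonneg hp2 (hFnn _)))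
            (mul_nonneg hp3 hGf0),
          ← ENNReal.ofReal_add (hFnn _) (by positivity)]
        apply ENNReal.ofReal_le_ofReal
        rw [div_mul_eq_mul_div, div_mul_eq_mul_div, div_mul_eq_mul_div,
          ← add_div, ← add_div, div_le_iff₀ hr]
        have hGf : min 1 (2 * Fpot Ilow Istar ρ I) ≤ 2 * Fpot Ilow Istar ρ I :=
          min_le_right _ _
        rcases lt_or_ge I Istar with hsplit | hsplit
        · have hmain := real_true_int (lam * ((n:ℝ) - I)) (I:ℝ) (Fpot Ilow Istar ρ I)
            (Fpot Ilow Istar ρ (I+1)) (Fpot Ilow Istar ρ (I-1))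
            (min 1 (2 * Fpot Ilow Istar ρ I)) (ρ ^ (Istar - Ilow)) ρ
            hρ0 hnI (Nat.cast_nonneg I) hFI (Fpot_pos hρ0 _).le hGf hm0.le
            (Fpot_geom hρ0 hρ1 hlow.le hsplit) (Fpot_pred_le hρ0 hρ1 I)
            (H2 I hlow hsplit hIn)
          linarith [hmain]
        · have hflat : Fpot Ilow Istar ρ I = ρ ^ (Istar - Ilow) := Fpot_flat hρ0 hρ1 hsplit
          have hflat1 : Fpot Ilow Istar ρ (I+1) = ρ ^ (Istar - Ilow) :=
            Fpot_flat hρ0 hρ1 (by omega)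
          have hmain := real_true_flat (lam * ((n:ℝ) - I)) (I:ℝ)
            (Fpot Ilow Istar ρ (I-1)) (min 1 (2 * ρ ^ (Istar - Ilow))) (ρ ^ (Istar - Ilow)) ρ
            hρ0 hρh hnI (Nat.cast_nonneg I) hm0 (Fpot_pos hρ0 _).le
            (by rw [← hflat]; exact Fpot_pred_le hρ0 hρ1 I)
            (min_le_right _ _)
          rw [hflat, hflat1]
          linarith [hmain]


set_option maxHeartbeats 2000000 in
/-- Started with infected center and at least λn/4 infected leaves, the
star infection chain survives for at least 2^{c√β} steps asymptotically almost surely. -/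
theorem star_survival_lower_aas (alpha : ℝ) (ha : -1 < alpha) (lam : ℕ → ℝ)
    (hlam : ∀ n, 0 < lam n ∧ lam n < 1)
    (hcond : ∀ n : ℕ, lam n * (lam n * n) ^ alpha ≤ 1)
    (hbeta : Tendsto (fun n : ℕ => lam n ^ (2 + alpha) * (n : ℝ) ^ (1 + alpha))
      atTop atTop)
    (I0 : ℕ → ℕ) (hI0 : ∀ n, lam n * n / 4 ≤ (I0 n : ℝ)) (hI0n : ∀ n, I0 n ≤ n) :
    ∃ c : ℝ, 0 < c ∧
      Tendsto (fun n : ℕ =>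
          1 - starDist n (lam n) alpha ((true : Bool), I0 n)
            ⌈(2 : ℝ) ^ (c * Real.sqrt (lam n ^ (2 + alpha) * (n : ℝ) ^ (1 + alpha)))⌉₊
            ((false : Bool), 0))
        atTop (nhds 1) := by
  classical
  have hsb : Tendsto (fun n : ℕ => Real.sqrt (lam n ^ (2+alpha) * (n:ℝ) ^ (1+alpha)))
      atTop atTop := by
    rw [tendsto_atTop]
    intro K
    filter_upwards [hbeta.eventually_ge_atTop ((max K 0)^2)] with n hn
    calc K ≤ max K 0 := le_max_left _ _
      _ = Real.sqrt ((max K 0)^2) := (Real.sqrt_sq (le_max_right _ _)).symm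
      _ ≤ _ := Real.sqrt_le_sqrt hn
  refine ⟨1/64, by norm_num, ?_⟩
  have key : ∀ᶠ n in atTop,
      starDist n (lam n) alpha ((true : Bool), I0 n)
        ⌈(2:ℝ) ^ ((1/64 : ℝ) * Real.sqrt (lam n ^ (2+alpha) * (n:ℝ) ^ (1+alpha)))⌉₊
        ((false : Bool), 0)
      ≤ ENNReal.ofReal (7 * Real.exp (-(3/64) *
          Real.sqrt (lam n ^ (2+alpha) * (n:ℝ) ^ (1+alpha)))) := by
    have hC1 : (1:ℝ) ≤ (8:ℝ) ^ |alpha| := Real.one_le_rpow (by norm_num) (abs_nonneg _)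
    filter_upwards [hbeta.eventually_ge_atTop 10000,
      hbeta.eventually_ge_atTop ((4 * (8:ℝ) ^ |alpha|)^2), eventually_ge_atTop 1]
      with n hβ1 hβ2 hn1
    obtain ⟨hlam0, hlam1⟩ := hlam n
    have hn0 : (0:ℝ) < n := by exact_mod_cast hn1
    obtain ⟨β, hβ_def⟩ : ∃ v : ℝ, v = lam n ^ (2+alpha) * (n:ℝ) ^ (1+alpha) := ⟨_, rfl⟩
    rw [← hβ_def] at hβ1 hβ2 ⊢
    obtain ⟨x, hx_def⟩ : ∃ v : ℝ, v = lam n * n := ⟨_, rfl⟩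
    have hx0 : 0 < x := by rw [hx_def]; exact mul_pos hlam0 hn0
    have hβ0 : (0:ℝ) < β := by
      rw [hβ_def]
      exact mul_pos (Real.rpow_pos_of_pos hlam0 _) (Real.rpow_pos_of_pos hn0 _)
    have hβeq : β = (lam n * x ^ alpha) * x := by
      rw [hβ_def, hx_def, Real.mul_rpow hlam0.le hn0.le]
      rw [show (2:ℝ)+alpha = 1 + (1+alpha) by ring, Real.rpow_add hlam0,
        Real.rpow_add hlam0, Real.rpow_one, Real.rpow_add hn0, Real.rpow_one]
      ring
    have hc : lam n * x ^ alpha ≤ 1 := by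
      have hc0 := hcond n
      rwa [← hx_def] at hc0
    have hβx : β ≤ x := by
      linarith [mul_le_mul_of_nonneg_right hc hx0.le]
    have hx100 : (100:ℝ) ≤ x := by linarith
    obtain ⟨sβ, hsβ_def⟩ : ∃ v : ℝ, v = Real.sqrt β := ⟨_, rfl⟩
    rw [← hsβ_def]
    have hsβ0 : 0 < sβ := by rw [hsβ_def]; exact Real.sqrt_pos.mpr hβ0
    have hsβsq : sβ^2 = β := by rw [hsβ_def]; exact Real.sq_sqrt hβ0.le
    have hsβ100 : 100 ≤ sβ := by
      have h1 : Real.sqrt 10000 ≤ sβ := by rw [hsβ_def]; exact Real.sqrt_le_sqrt hβ1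
      rwa [show (10000:ℝ) = 100^2 by norm_num, Real.sqrt_sq (by norm_num)] at h1
    have hsβC : 4 * (8:ℝ) ^ |alpha| ≤ sβ := by
      have h1 : Real.sqrt ((4 * (8:ℝ) ^ |alpha|)^2) ≤ sβ := by
        rw [hsβ_def]; exact Real.sqrt_le_sqrt hβ2
      rwa [Real.sqrt_sq (by positivity)] at h1
    have hsβx : sβ ≤ x / 10 := by
      have h1 : β ≤ (x/10)^2 := by
        have hx2 : (0:ℝ) ≤ x * (x - 100) := mul_nonneg (by linarith) (by linarith)
        linarith [hx2, hβx]
      have h2 := Real.sqrt_le_sqrt h1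
      rw [Real.sqrt_sq (by positivity)] at h2
      rw [hsβ_def]; exact h2
    obtain ⟨ρ, hρ_def⟩ : ∃ v : ℝ, v = 1 - sβ / x := ⟨_, rfl⟩
    have hu : sβ / x ≤ 1/10 := by rw [div_le_iff₀ hx0]; linarith
    have hu0 : 0 < sβ / x := div_pos hsβ0 hx0
    have hρ0 : 0 < ρ := by rw [hρ_def]; linarith
    have hρ1 : ρ ≤ 1 := by rw [hρ_def]; linarith
    have hρh : 1/2 ≤ ρ := by rw [hρ_def]; linarith
    have hρ9 : 9/10 ≤ ρ := by rw [hρ_def]; linarith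
    have h1ρ : 1 - ρ = sβ / x := by rw [hρ_def]; ring
    obtain ⟨Ilow, hIlow_def⟩ : ∃ v : ℕ, v = ⌈x/8⌉₊ := ⟨_, rfl⟩
    obtain ⟨Istar, hIstar_def⟩ : ∃ v : ℕ, v = ⌈x/4⌉₊ := ⟨_, rfl⟩
    have hIlow_lb : x/8 ≤ (Ilow:ℝ) := by rw [hIlow_def]; exact Nat.le_ceil _
    have hIlow_ub : (Ilow:ℝ) < x/8 + 1 := by rw [hIlow_def]; exact Nat.ceil_lt_add_one (by positivity)
    have hIstar_lb : x/4 ≤ (Istar:ℝ) := by rw [hIstar_def]; exact Nat.le_ceil _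
    have hIstar_ub : (Istar:ℝ) < x/4 + 1 := by rw [hIstar_def]; exact Nat.ceil_lt_add_one (by positivity)
    have hII : Ilow ≤ Istar := by rw [hIlow_def, hIstar_def]; exact Nat.ceil_le_ceil (by linarith)
    have hIstarI0 : Istar ≤ I0 n := by
      rw [hIstar_def]
      exact Nat.ceil_le.mpr (by rw [hx_def]; exact hI0 n)
    have hlamxa : lam n * x ^ alpha = β / x := by
      rw [hβeq]; field_simp
    have h8p : (0:ℝ) < (8:ℝ)^|alpha| := Real.rpow_pos_of_pos (by norm_num) _
    have H1 : ∀ I : ℕ, Ilow < I → I ≤ Istar → 2*(1-ρ) ≤ ρ * (lam n * (I:ℝ) ^ alpha) := by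
      intro I hI1 hI2
      have hIl : x/8 ≤ (I:ℝ) := le_trans hIlow_lb (by exact_mod_cast Nat.le_of_lt hI1)
      have hIpos : (0:ℝ) < I := lt_of_lt_of_le (by linarith) hIl
      have hIu : (I:ℝ) ≤ x/2 := by
        have h1 : (I:ℝ) ≤ (Istar:ℝ) := by exact_mod_cast hI2
        linarith
      have hlow8 : (β/x) / (8:ℝ)^|alpha| ≤ lam n * (I:ℝ)^alpha := by
        rcases le_or_gt 0 alpha with hα | hα
        · have h8e : |alpha| = alpha := abs_of_nonneg hα
          have hr : (x/8) ^ alpha ≤ (I:ℝ)^alpha := Real.rpow_le_rpow (by positivity) hIl hα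
          have hd : (x/8)^alpha = x^alpha / (8:ℝ)^alpha := Real.div_rpow hx0.le (by norm_num) alpha
          rw [h8e, ← hlamxa]
          calc lam n * x^alpha / (8:ℝ)^alpha = lam n * ((x/8)^alpha) := by rw [hd]; ring
            _ ≤ lam n * (I:ℝ)^alpha := mul_le_mul_of_nonneg_left hr hlam0.le
        · have hr : (x/2) ^ alpha ≤ (I:ℝ)^alpha :=
            Real.rpow_le_rpow_of_nonpos hIpos hIu hα.le
          have hd : (x/2)^alpha = x^alpha / (2:ℝ)^alpha := Real.div_rpow hx0.le (by norm_num) alpha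
          have h2 : (2:ℝ)^alpha ≤ 1 :=
            Real.rpow_le_one_of_one_le_of_nonpos (by norm_num) hα.le
          have h2p : (0:ℝ) < (2:ℝ)^alpha := Real.rpow_pos_of_pos (by norm_num) _
          have hxa : (0:ℝ) < x^alpha := Real.rpow_pos_of_pos hx0 _
          have hstep : x^alpha ≤ (x/2)^alpha := by
            rw [hd, le_div_iff₀ h2p]
            linarith [mul_le_mul_of_nonneg_left h2 hxa.le]
          rw [← hlamxa]
          calc lam n * x^alpha / (8:ℝ)^|alpha| ≤ lam n * x^alpha := by
                rw [div_le_iff₀ h8p]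
                linarith [mul_le_mul_of_nonneg_left hC1 (mul_pos hlam0 hxa).le]
            _ ≤ lam n * (x/2)^alpha := mul_le_mul_of_nonneg_left hstep hlam0.le
            _ ≤ lam n * (I:ℝ)^alpha := mul_le_mul_of_nonneg_left hr hlam0.le
      have hkey : 2 * sβ * (8:ℝ)^|alpha| ≤ ρ * β := by
        have q1 := mul_le_mul_of_nonneg_right hsβC hsβ0.le
        have q2 := mul_le_mul_of_nonneg_right hρh hβ0.le
        linarith [q1, q2, hsβsq]
      have hmid : 2 * (sβ/x) ≤ ρ * ((β/x) / (8:ℝ)^|alpha|) := by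
        have e1 : 2*(sβ/x) = (2*sβ*(8:ℝ)^|alpha|) / ((8:ℝ)^|alpha| * x) := by
          field_simp
        have e2 : ρ * ((β/x) / (8:ℝ)^|alpha|) = (ρ*β) / ((8:ℝ)^|alpha| * x) := by
          field_simp
        rw [e1, e2]
        exact (div_le_div_iff_of_pos_right (by positivity)).mpr hkey
      rw [h1ρ]
      calc 2 * (sβ/x) ≤ ρ * ((β/x) / (8:ℝ)^|alpha|) := hmid
        _ ≤ ρ * (lam n * (I:ℝ)^alpha) := mul_le_mul_of_nonneg_left hlow8 hρ0.le
    have H2 : ∀ I : ℕ, Ilow < I → I < Istar → I ≤ n →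
        ρ + (I:ℝ) * (1-ρ) ≤ ρ * (lam n * ((n:ℝ) - (I:ℝ))) * (1-ρ) := by
      intro I hI1 hI2 hI3
      have hIu : (I:ℝ) ≤ x/4 := by
        have h1 : I + 1 ≤ Istar := hI2
        have h2 : ((I:ℝ) + 1) ≤ (Istar:ℝ) := by exact_mod_cast h1
        linarith
      have hIl0 : (0:ℝ) ≤ I := Nat.cast_nonneg I
      have hlnI : x - x/4 ≤ lam n * ((n:ℝ) - I) := by
        have hlamI : lam n * (I:ℝ) ≤ (I:ℝ) := by nlinarith
        have hxe : lam n * ((n:ℝ) - I) = x - lam n * I := by rw [hx_def]; ring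
        linarith
      have hln0 : (0:ℝ) ≤ lam n * ((n:ℝ) - I) := by linarith
      rw [h1ρ]
      have hxu : x * (sβ/x) = sβ := by field_simp
      have p1 : (3/4*x) * (sβ/x) ≤ (lam n * ((n:ℝ) - I)) * (sβ/x) :=
        mul_le_mul_of_nonneg_right (by linarith) hu0.le
      have p2 : (9/10) * ((lam n * ((n:ℝ) - I)) * (sβ/x)) ≤
          ρ * ((lam n * ((n:ℝ) - I)) * (sβ/x)) :=
        mul_le_mul_of_nonneg_right hρ9 (mul_nonneg hln0 hu0.le)
      have p3 : (I:ℝ) * (sβ/x) ≤ (x/4) * (sβ/x) := mul_le_mul_of_nonneg_right hIu hu0.le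
      linarith [hxu, p1, p2, p3]
    obtain ⟨K, hK_def⟩ : ∃ v : ℕ, v = Istar - Ilow := ⟨_, rfl⟩
    have hKc : (K:ℝ) = (Istar:ℝ) - (Ilow:ℝ) := by
      rw [hK_def, Nat.cast_sub hII]
    have hK : x/16 ≤ (K:ℝ) := by rw [hKc]; linarith
    obtain ⟨m, hm_def⟩ : ∃ v : ℝ, v = ρ ^ K := ⟨_, rfl⟩
    have hm0 : 0 < m := by rw [hm_def]; exact pow_pos hρ0 K
    have hρexp : ρ ≤ Real.exp (-(sβ/x)) := by
      have h1 := Real.add_one_le_exp (-(sβ/x))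
      rw [hρ_def]; linarith
    have hmexp : m ≤ Real.exp (-(sβ/16)) := by
      rw [hm_def]
      calc ρ^K ≤ (Real.exp (-(sβ/x)))^K := pow_le_pow_left₀ hρ0.le hρexp K
        _ = Real.exp ((K:ℝ) * (-(sβ/x))) := (Real.exp_nat_mul _ K).symm
        _ ≤ Real.exp (-(sβ/16)) := by
            apply Real.exp_le_exp.mpr
            have e : (x/16) * (sβ/x) = sβ/16 := by field_simp
            linarith [mul_le_mul_of_nonneg_right hK hu0.le]
    have hgabs : (1:ℝ≥0∞) ≤ ENNReal.ofReal (Gpot Ilow Istar ρ ((false:Bool), 0)) := by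
      have hg1 : Gpot Ilow Istar ρ ((false:Bool), 0) = 1 := by
        rw [Gpot_false, Fpot_low hρ0 hρ1 (Nat.zero_le _)]
        norm_num
      rw [hg1, ENNReal.ofReal_one]
    have hrow := star_row_le n (lam n) alpha hlam0
    have hdrift := star_drift n Ilow Istar (lam n) alpha ρ hlam0 hρ0 hρ1 hρh hII H1 H2
    have hbound := markov_point_le (starStep n (lam n) alpha) hrow
      (fun J => ENNReal.ofReal (Gpot Ilow Istar ρ J)) (ENNReal.ofReal (3 * ρ ^ (Istar - Ilow)))
      hdrift ((true:Bool), I0 n) ((false:Bool), 0) hgabs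
      ⌈(2:ℝ) ^ ((1/64 : ℝ) * sβ)⌉₊
    have hXid : starDist n (lam n) alpha ((true:Bool), I0 n) =
        markovDist (starStep n (lam n) alpha) ((true:Bool), I0 n) := rfl
    rw [hXid]
    refine le_trans hbound ?_
    have hGs0 : Gpot Ilow Istar ρ ((true:Bool), I0 n) = m := by
      rw [Gpot_true, Fpot_flat hρ0 hρ1 hIstarI0, hm_def, hK_def]
    simp only [hGs0]
    obtain ⟨t, ht_def⟩ : ∃ v : ℕ, v = ⌈(2:ℝ)^((1/64:ℝ)*sβ)⌉₊ := ⟨_, rfl⟩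
    rw [← ht_def]
    have hy0 : (0:ℝ) ≤ (2:ℝ)^((1/64:ℝ)*sβ) := by positivity
    have htR : (t:ℝ) ≤ (2:ℝ)^((1/64:ℝ)*sβ) + 1 := by
      rw [ht_def]; exact (Nat.ceil_lt_add_one hy0).le
    have h3m : 3 * ρ ^ (Istar - Ilow) = 3 * m := by rw [hm_def, hK_def]
    rw [h3m, show ((t:ℕ):ℝ≥0∞) = ENNReal.ofReal (t:ℝ) from (ENNReal.ofReal_natCast t).symm,
      ← ENNReal.ofReal_mul (Nat.cast_nonneg t),
      ← ENNReal.ofReal_add hm0.le (by positivity)]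
    apply ENNReal.ofReal_le_ofReal
    have hy : (2:ℝ)^((1/64:ℝ)*sβ) = Real.exp (Real.log 2 * ((1/64:ℝ)*sβ)) := by
      rw [Real.rpow_def_of_pos (by norm_num)]
    have hlog2 : Real.log 2 ≤ 1 := by
      linarith [Real.log_le_sub_one_of_pos (by norm_num : (0:ℝ) < 2)]
    have hlog2' : (0:ℝ) ≤ Real.log 2 := Real.log_nonneg (by norm_num)
    have hy1 : 1 ≤ (2:ℝ)^((1/64:ℝ)*sβ) := Real.one_le_rpow (by norm_num) (by positivity)
    have hstep1 : m + (t:ℝ)*(3*m) ≤ 7 * (m * (2:ℝ)^((1/64:ℝ)*sβ)) := by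
      linarith [mul_le_mul_of_nonneg_left htR (by positivity : (0:ℝ) ≤ 3*m),
        mul_le_mul_of_nonneg_left hy1 hm0.le]
    have hstep2 : m * (2:ℝ)^((1/64:ℝ)*sβ) ≤ Real.exp (-(3/64)*sβ) := by
      rw [hy]
      calc m * Real.exp (Real.log 2 * ((1/64:ℝ)*sβ))
          ≤ Real.exp (-(sβ/16)) * Real.exp (Real.log 2 * ((1/64:ℝ)*sβ)) :=
            mul_le_mul_of_nonneg_right hmexp (Real.exp_nonneg _)
        _ = Real.exp (-(sβ/16) + Real.log 2 * ((1/64:ℝ)*sβ)) := (Real.exp_add _ _).symm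
        _ ≤ Real.exp (-(3/64)*sβ) := by
            apply Real.exp_le_exp.mpr
            linarith [mul_le_mul_of_nonneg_right hlog2 hsβ0.le]
    linarith [mul_le_mul_of_nonneg_left hstep2 (by norm_num : (0:ℝ) ≤ 7)]
  have hYr : Tendsto (fun n : ℕ => 7 * Real.exp (-(3/64) *
      Real.sqrt (lam n ^ (2+alpha) * (n:ℝ) ^ (1+alpha)))) atTop (nhds 0) := by
    have h1 : Tendsto (fun n : ℕ => -(3/64) *
        Real.sqrt (lam n ^ (2+alpha) * (n:ℝ) ^ (1+alpha))) atTop atBot :=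
      (tendsto_const_mul_atBot_of_neg (by norm_num)).mpr hsb
    have h2 := Real.tendsto_exp_atBot.comp h1
    have h3 := h2.const_mul (7:ℝ)
    simpa using h3
  have hY : Tendsto (fun n : ℕ => ENNReal.ofReal (7 * Real.exp (-(3/64) *
      Real.sqrt (lam n ^ (2+alpha) * (n:ℝ) ^ (1+alpha))))) atTop (nhds 0) := by
    simpa using ENNReal.tendsto_ofReal hYr
  have hX : Tendsto (fun n : ℕ =>
      starDist n (lam n) alpha ((true : Bool), I0 n)
        ⌈(2:ℝ) ^ ((1/64 : ℝ) * Real.sqrt (lam n ^ (2+alpha) * (n:ℝ) ^ (1+alpha)))⌉₊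
        ((false : Bool), 0)) atTop (nhds 0) :=
    tendsto_of_tendsto_of_tendsto_of_le_of_le' tendsto_const_nhds hY
      (Eventually.of_forall (fun n => zero_le)) key
  have hfin := ENNReal.Tendsto.sub
    (tendsto_const_nhds : Tendsto (fun _ : ℕ => (1:ℝ≥0∞)) atTop (nhds 1)) hX
    (Or.inl ENNReal.one_ne_top)
  simpa using hfin
end
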